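/- arXiv:2311.15409 — 4 statements merged into one kernel-verified Lean document; each statement's English description precedes it below -/
import Mathlib

section
/- For any algebraically closed field F of characteristic 2, SL₂(F) is an ICC group: every non-identity element has an infinite conjugacy class. -/
open Matrix

namespace SL2Aux

variable {F : Type*} [Field F]

def U (t : F) : SpecialLinearGroup (Fin 2) F :=
  ⟨!![1, t; 0, 1], by simp [Matrix.det_fin_two_of]⟩

def L (t : F) : SpecialLinearGroup (Fin 2) F :=
  ⟨!![1, 0; t, 1], by simp [Matrix.det_fin_two_of]⟩

variable [CharP F 2]

lemma U_inv (t : F) : (U t)⁻¹ = U t := by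
  apply inv_eq_of_mul_eq_one_right
  ext i j
  fin_cases i <;> fin_cases j <;>
    rw [Matrix.SpecialLinearGroup.coe_mul] <;> simp [U, Matrix.mul_fin_two, Matrix.one_fin_two, CharTwo.add_self_eq_zero]

lemma L_inv (t : F) : (L t)⁻¹ = L t := by
  apply inv_eq_of_mul_eq_one_right
  ext i j
  fin_cases i <;> fin_cases j <;>
    rw [Matrix.SpecialLinearGroup.coe_mul] <;> simp [L, Matrix.mul_fin_two, Matrix.one_fin_two, CharTwo.add_self_eq_zero]

omit [CharP F 2] in
lemma aux [Infinite F] (g : SpecialLinearGroup (Fin 2) F)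
    (c : F → SpecialLinearGroup (Fin 2) F) (i j : Fin 2)
    (h : Function.Injective fun t : F =>
      (((c t)⁻¹ * g * c t : SpecialLinearGroup (Fin 2) F) :
        Matrix (Fin 2) (Fin 2) F) i j) :
    (Set.range fun h : SpecialLinearGroup (Fin 2) F => h⁻¹ * g * h).Infinite :=
  Set.infinite_of_injective_forall_mem
    (f := fun t : F => (c t)⁻¹ * g * c t)
    (fun a b hab => h (by simp only [hab])) (fun t => ⟨c t, rfl⟩)

end SL2Aux

open SL2Aux

/-- For any algebraically closed field `F` of characteristic 2, `SL₂(F)` is an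
ICC group: every non-identity element has an infinite conjugacy class. -/
theorem sl2_char_two_icc
    (F : Type*) [Field F] [IsAlgClosed F] [CharP F 2]
    (g : SpecialLinearGroup (Fin 2) F) (hg : g ≠ 1) :
    (Set.range fun h : SpecialLinearGroup (Fin 2) F => h⁻¹ * g * h).Infinite := by
  set A : Matrix (Fin 2) (Fin 2) F := (g : Matrix (Fin 2) (Fin 2) F) with hA
  have hAe : A = !![A 0 0, A 0 1; A 1 0, A 1 1] := Matrix.eta_fin_two A
  by_cases h10 : A 1 0 ≠ 0
  · apply aux g U 1 1
    intro s t hst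
    have key : ∀ x : F, (((U x)⁻¹ * g * U x : SpecialLinearGroup (Fin 2) F) :
        Matrix (Fin 2) (Fin 2) F) 1 1 = A 1 0 * x + A 1 1 := by
      intro x
      rw [U_inv]
      simp only [Matrix.SpecialLinearGroup.coe_mul, ← hA]
      rw [hAe]
      simp [U, Matrix.mul_fin_two]
    simp only [key] at hst
    exact mul_left_cancel₀ h10 (add_right_cancel hst)
  · push_neg at h10
    by_cases h01 : A 0 1 ≠ 0
    · apply aux g L 0 0
      intro s t hst
      have key : ∀ x : F, (((L x)⁻¹ * g * L x : SpecialLinearGroup (Fin 2) F) :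
          Matrix (Fin 2) (Fin 2) F) 0 0 = A 0 1 * x + A 0 0 := by
        intro x
        rw [L_inv]
        simp only [Matrix.SpecialLinearGroup.coe_mul, ← hA]
        rw [hAe]
        simp [L, Matrix.mul_fin_two]
        ring
      simp only [key] at hst
      exact mul_left_cancel₀ h01 (add_right_cancel hst)
    · push_neg at h01
      -- diagonal case
      have hd : A 0 0 * A 1 1 = 1 := by
        have := g.2
        rw [Matrix.det_fin_two] at this
        rw [← hA] at this
        rw [h10, h01] at this
        simpa using this
      have hne : A 0 0 + A 1 1 ≠ 0 := by
        intro hsum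
        have heq : A 1 1 = A 0 0 := by
          have := CharTwo.neg_eq (A 0 0)
          linear_combination hsum + this
        have hsq : (A 0 0 - 1) ^ 2 = 0 := by
          have h2 : (2 : F) = 0 := CharTwo.two_eq_zero
          have hone : A 0 0 * A 0 0 = 1 := by rw [heq] at hd; exact hd
          linear_combination hone + (1 - A 0 0) * h2
        have h1 : A 0 0 = 1 := by
          have := pow_eq_zero_iff (n := 2) (by norm_num) |>.mp hsq
          exact sub_eq_zero.mp this
        apply hg
        ext i j
        fin_cases i <;> fin_cases j <;>
          simp [← hA, h1, h10, h01, Matrix.one_fin_two, heq]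
      apply aux g U 0 1
      intro s t hst
      have key : ∀ x : F, (((U x)⁻¹ * g * U x : SpecialLinearGroup (Fin 2) F) :
          Matrix (Fin 2) (Fin 2) F) 0 1 = (A 0 0 + A 1 1) * x + (A 0 1 + x * x * A 1 0) := by
        intro x
        rw [U_inv]
        simp only [Matrix.SpecialLinearGroup.coe_mul, ← hA]
        rw [hAe]
        simp [U, Matrix.mul_fin_two]
        ring
      simp only [key, h10, mul_zero, add_zero] at hst
      exact mul_left_cancel₀ hne (add_right_cancel hst)
end

section
/- If G is an inner amenable group in which the centralizer C(g) is amenable for every non-identity g ∈ G, then G is amenable. -/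
/-- A finitely additive probability measure defined on all subsets of `X`. -/
def IsFAPMeasure {X : Type*} (μ : Set X → ℝ) : Prop :=
  μ Set.univ = 1 ∧ (∀ A : Set X, 0 ≤ μ A) ∧
    ∀ A B : Set X, Disjoint A B → μ (A ∪ B) = μ A + μ B

/-- A group is amenable if its left translation action on itself admits an
invariant finitely additive probability measure. -/
def AmenableGroup (G : Type*) [Group G] : Prop :=
  ∃ μ : Set G → ℝ, IsFAPMeasure μ ∧ ∀ (g : G) (A : Set G), μ ((g * ·) '' A) = μ A

/-- Conjugation by `g` as a map on the non-identity elements of `G`. -/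
def conjNonId {G : Type*} [Group G] (g : G) (x : {h : G // h ≠ 1}) : {h : G // h ≠ 1} :=
  ⟨g * x.1 * g⁻¹, fun hx => x.2 (by
    have h1 : x.1 = g⁻¹ * (g * x.1 * g⁻¹) * g := by group
    rw [h1, hx]; group)⟩

/-- A group is inner amenable if the conjugation action on its set of
non-identity elements admits an invariant finitely additive probability
measure. -/
def InnerAmenable (G : Type*) [Group G] : Prop :=
  ∃ μ : Set {h : G // h ≠ 1} → ℝ, IsFAPMeasure μ ∧
    ∀ (g : G) (A : Set {h : G // h ≠ 1}), μ (conjNonId g '' A) = μ A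

section FA

open Filter

variable {X : Type*}

lemma fa_empty {μ : Set X → ℝ} (hμ : IsFAPMeasure μ) : μ (∅ : Set X) = 0 := by
  have h := hμ.2.2 ∅ ∅ (by simp)
  simp only [Set.union_empty] at h
  linarith

lemma fa_mono {μ : Set X → ℝ} (hμ : IsFAPMeasure μ) {A B : Set X} (h : A ⊆ B) :
    μ A ≤ μ B := by
  have h2 := hμ.2.2 A (B \ A) disjoint_sdiff_self_right
  rw [Set.union_diff_cancel h] at h2
  have h3 := hμ.2.1 (B \ A)
  linarith

lemma fa_le_one {μ : Set X → ℝ} (hμ : IsFAPMeasure μ) (A : Set X) : μ A ≤ 1 := by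
  have := fa_mono hμ (Set.subset_univ A)
  rwa [hμ.1] at this

/-- Finite additivity over a finite disjoint family covering `A`. -/
lemma fa_partition {μ : Set X → ℝ} (hμ : IsFAPMeasure μ) {ι : Type*}
    (s : Finset ι) (P : ι → Set X)
    (hd : ∀ i ∈ s, ∀ j ∈ s, i ≠ j → Disjoint (P i) (P j))
    (A : Set X) (hA : ∀ x ∈ A, ∃ i ∈ s, x ∈ P i) :
    μ A = ∑ i ∈ s, μ (A ∩ P i) := by
  classical
  induction s using Finset.induction_on generalizing A with
  | empty =>
    have : A = ∅ := by
      ext x; simp only [Set.mem_empty_iff_false, iff_false]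
      intro hx; obtain ⟨i, hi, _⟩ := hA x hx; simp at hi
    rw [this, fa_empty hμ, Finset.sum_empty]
  | @insert a s ha ih =>
    have hsplit : A = (A ∩ P a) ∪ (A \ P a) := by
      ext x; by_cases hx : x ∈ P a <;> simp [hx]
    have hdisj : Disjoint (A ∩ P a) (A \ P a) := by
      rw [Set.disjoint_left]; rintro x ⟨_, hx2⟩ ⟨_, hx4⟩; exact hx4 hx2
    have h1 : μ A = μ (A ∩ P a) + μ (A \ P a) := by
      conv_lhs => rw [hsplit]
      exact hμ.2.2 _ _ hdisj
    have h2 : μ (A \ P a) = ∑ i ∈ s, μ ((A \ P a) ∩ P i) := by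
      refine ih (fun i hi j hj hij => hd i (Finset.mem_insert_of_mem hi) j
        (Finset.mem_insert_of_mem hj) hij) (A \ P a) ?_
      rintro x ⟨hx1, hx2⟩
      obtain ⟨i, hi, hxi⟩ := hA x hx1
      rcases Finset.mem_insert.mp hi with rfl | hi'
      · exact absurd hxi hx2
      · exact ⟨i, hi', hxi⟩
    have h3 : ∀ i ∈ s, (A \ P a) ∩ P i = A ∩ P i := by
      intro i hi
      ext x
      constructor
      · rintro ⟨⟨hx1, _⟩, hx3⟩; exact ⟨hx1, hx3⟩
      · rintro ⟨hx1, hx2⟩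
        refine ⟨⟨hx1, fun hxa => ?_⟩, hx2⟩
        have := hd a (Finset.mem_insert_self a s) i (Finset.mem_insert_of_mem hi)
          (fun h => ha (h ▸ hi))
        exact (Set.disjoint_left.mp this hxa) hx2
    rw [Finset.sum_insert ha, h1, h2, Finset.sum_congr rfl (fun i hi => by rw [h3 i hi])]

/-- The elementary "integral" of a bounded `ℕ`-valued function. -/
noncomputable def faJ (μ : Set X → ℝ) (K : ℕ) (w : X → ℕ) : ℝ :=
  ∑ k ∈ Finset.Icc 1 K, μ {x | k ≤ w x}

lemma faJ_abel {μ : Set X → ℝ} (hμ : IsFAPMeasure μ) {K : ℕ} {w : X → ℕ}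
    (hw : ∀ x, w x ≤ K) :
    faJ μ K w = ∑ m ∈ Finset.range (K + 1), (m : ℝ) * μ {x | w x = m} := by
  classical
  have step1 : ∀ k ∈ Finset.Icc 1 K, μ {x | k ≤ w x}
      = ∑ m ∈ Finset.Icc 1 K, (if k ≤ m then μ {x | w x = m} else 0) := by
    intro k hk
    rw [Finset.mem_Icc] at hk
    have hpart := fa_partition hμ (Finset.Icc k K) (fun m => {x | w x = m})
      (fun i _ j _ hij => by
        rw [Set.disjoint_left]; intro x hx1 hx2
        exact hij (by simp only [Set.mem_setOf_eq] at hx1 hx2; omega))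
      {x | k ≤ w x}
      (fun x hx => ⟨w x, Finset.mem_Icc.mpr ⟨hx, hw x⟩, rfl⟩)
    have hinter : ∀ m ∈ Finset.Icc k K, {x | k ≤ w x} ∩ {x | w x = m} = {x | w x = m} := by
      intro m hm
      rw [Finset.mem_Icc] at hm
      ext x; simp only [Set.mem_inter_iff, Set.mem_setOf_eq]
      constructor
      · rintro ⟨_, h2⟩; exact h2
      · intro h; exact ⟨by omega, h⟩
    have e1 : ∑ i ∈ Finset.Icc k K, μ ({x | k ≤ w x} ∩ {x | w x = i})
        = ∑ i ∈ Finset.Icc k K, μ {x | w x = i} :=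
      Finset.sum_congr rfl fun m hm => congrArg μ (hinter m hm)
    have e2 : ∑ i ∈ Finset.Icc k K, μ {x | w x = i}
        = ∑ m ∈ Finset.Icc 1 K, (if k ≤ m then μ {x | w x = m} else 0) := by
      rw [← Finset.sum_filter]
      refine Finset.sum_congr ?_ (fun _ _ => rfl)
      ext m1; simp only [Finset.mem_Icc, Finset.mem_filter]; omega
    exact hpart.trans (e1.trans e2)
  unfold faJ
  rw [Finset.sum_congr rfl step1, Finset.sum_comm]
  have step2 : ∀ m ∈ Finset.Icc 1 K,
      (∑ k ∈ Finset.Icc 1 K, if k ≤ m then μ {x | w x = m} else 0)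
        = (m : ℝ) * μ {x | w x = m} := by
    intro m hm
    rw [Finset.mem_Icc] at hm
    rw [← Finset.sum_filter]
    have : (Finset.Icc 1 K).filter (fun k => k ≤ m) = Finset.Icc 1 m := by
      ext k; simp only [Finset.mem_Icc, Finset.mem_filter]; omega
    rw [this, Finset.sum_const, Nat.card_Icc, nsmul_eq_mul]
    norm_num
  rw [Finset.sum_congr rfl step2]
  have : Finset.range (K + 1) = insert 0 (Finset.Icc 1 K) := by
    ext k; simp only [Finset.mem_range, Finset.mem_insert, Finset.mem_Icc]; omega
  rw [this, Finset.sum_insert (by simp)]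
  simp

lemma faJ_add {μ : Set X → ℝ} (hμ : IsFAPMeasure μ) {K : ℕ} {u v : X → ℕ}
    (huv : ∀ x, u x + v x ≤ K) :
    faJ μ K (fun x => u x + v x) = faJ μ K u + faJ μ K v := by
  classical
  have hu : ∀ x, u x ≤ K := fun x => le_trans (Nat.le_add_right _ _) (huv x)
  have hv : ∀ x, v x ≤ K := fun x => le_trans (Nat.le_add_left _ _) (huv x)
  rw [faJ_abel hμ huv, faJ_abel hμ hu, faJ_abel hμ hv]
  set P : ℕ × ℕ → Set X := fun p => {x | u x = p.1} ∩ {x | v x = p.2} with hP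
  set grid : Finset (ℕ × ℕ) := Finset.range (K + 1) ×ˢ Finset.range (K + 1) with hgrid
  have hdisj : ∀ p ∈ grid, ∀ q ∈ grid, p ≠ q → Disjoint (P p) (P q) := by
    intro p _ q _ hpq
    rw [Set.disjoint_left]
    rintro x ⟨h1, h2⟩ ⟨h3, h4⟩
    simp only [Set.mem_setOf_eq] at h1 h2 h3 h4
    exact hpq (Prod.ext (by omega) (by omega))
  have hcov : ∀ (A : Set X), ∀ x ∈ A, ∃ p ∈ grid, x ∈ P p := by
    intro A x _
    exact ⟨(u x, v x), by simp [hgrid, Finset.mem_product, Nat.lt_succ_iff, hu x, hv x],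
      ⟨rfl, rfl⟩⟩
  -- LHS expansion
  have lhs_eq : ∑ m ∈ Finset.range (K + 1), (m : ℝ) * μ {x | u x + v x = m}
      = ∑ p ∈ grid, ((p.1 : ℝ) + (p.2 : ℝ)) * μ (P p) := by
    have hm : ∀ m ∈ Finset.range (K + 1), (m : ℝ) * μ {x | u x + v x = m}
        = ∑ p ∈ grid, (if p.1 + p.2 = m then (m : ℝ) * μ (P p) else 0) := by
      intro m _
      rw [fa_partition hμ grid P hdisj {x | u x + v x = m} (hcov _), Finset.mul_sum]
      refine Finset.sum_congr rfl fun p _ => ?_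
      by_cases h : p.1 + p.2 = m
      · rw [if_pos h]
        congr 2
        ext x
        simp only [Set.mem_inter_iff, Set.mem_setOf_eq, hP]
        constructor
        · rintro ⟨_, h2⟩; exact h2
        · rintro ⟨h1, h2⟩; exact ⟨by omega, h1, h2⟩
      · rw [if_neg h]
        have : {x | u x + v x = m} ∩ P p = ∅ := by
          ext x
          simp only [Set.mem_inter_iff, Set.mem_setOf_eq, hP, Set.mem_empty_iff_false,
            iff_false, not_and]
          rintro h1 h2 h3; exact h (by omega)
        rw [this, fa_empty hμ, mul_zero]
    rw [Finset.sum_congr rfl hm, Finset.sum_comm]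
    refine Finset.sum_congr rfl fun p hp => ?_
    have hsum : ∑ m ∈ Finset.range (K + 1), (if p.1 + p.2 = m then (m : ℝ) * μ (P p) else 0)
        = if p.1 + p.2 ∈ Finset.range (K + 1) then ((p.1 + p.2 : ℕ) : ℝ) * μ (P p) else 0 := by
      rw [Finset.sum_ite_eq]
    rw [hsum]
    by_cases h : p.1 + p.2 ∈ Finset.range (K + 1)
    · rw [if_pos h]; push_cast; ring
    · rw [if_neg h]
      have hPe : P p = ∅ := by
        ext x
        simp only [hP, Set.mem_inter_iff, Set.mem_setOf_eq, Set.mem_empty_iff_false, iff_false,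
          not_and]
        intro h1 h2
        exact h (Finset.mem_range.mpr (by have := huv x; omega))
      rw [hPe, fa_empty hμ, mul_zero]
  -- RHS marginals
  have marg1 : ∑ m ∈ Finset.range (K + 1), (m : ℝ) * μ {x | u x = m}
      = ∑ p ∈ grid, (p.1 : ℝ) * μ (P p) := by
    rw [hgrid, Finset.sum_product]
    refine Finset.sum_congr rfl fun i _ => ?_
    have : μ {x | u x = i} = ∑ j ∈ Finset.range (K + 1), μ ({x | u x = i} ∩ {x | v x = j}) :=
      fa_partition hμ _ (fun j => {x | v x = j})
        (fun a _ b _ hab => by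
          rw [Set.disjoint_left]; intro x hx1 hx2
          simp only [Set.mem_setOf_eq] at hx1 hx2; exact hab (by omega))
        _ (fun x _ => ⟨v x, Finset.mem_range.mpr (Nat.lt_succ_of_le (hv x)), rfl⟩)
    rw [this, Finset.mul_sum]
  have marg2 : ∑ m ∈ Finset.range (K + 1), (m : ℝ) * μ {x | v x = m}
      = ∑ p ∈ grid, (p.2 : ℝ) * μ (P p) := by
    rw [hgrid, Finset.sum_product_right]
    refine Finset.sum_congr rfl fun j _ => ?_
    have : μ {x | v x = j} = ∑ i ∈ Finset.range (K + 1), μ ({x | v x = j} ∩ {x | u x = i}) :=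
      fa_partition hμ _ (fun i => {x | u x = i})
        (fun a _ b _ hab => by
          rw [Set.disjoint_left]; intro x hx1 hx2
          simp only [Set.mem_setOf_eq] at hx1 hx2; exact hab (by omega))
        _ (fun x _ => ⟨u x, Finset.mem_range.mpr (Nat.lt_succ_of_le (hu x)), rfl⟩)
    rw [this, Finset.mul_sum]
    refine Finset.sum_congr rfl fun i _ => ?_
    congr 1
    exact congrArg μ (Set.inter_comm _ _)
  rw [lhs_eq, marg1, marg2, ← Finset.sum_add_distrib]
  refine Finset.sum_congr rfl fun p _ => ?_
  ring

lemma faJ_mono {μ : Set X → ℝ} (hμ : IsFAPMeasure μ) {K : ℕ} {u v : X → ℕ}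
    (h : ∀ x, u x ≤ v x) : faJ μ K u ≤ faJ μ K v := by
  refine Finset.sum_le_sum fun k _ => fa_mono hμ ?_
  intro x hx
  simp only [Set.mem_setOf_eq] at hx ⊢
  exact le_trans hx (h x)

lemma faJ_nonneg {μ : Set X → ℝ} (hμ : IsFAPMeasure μ) {K : ℕ} {w : X → ℕ} :
    0 ≤ faJ μ K w :=
  Finset.sum_nonneg fun k _ => hμ.2.1 _

lemma faJ_le {μ : Set X → ℝ} (hμ : IsFAPMeasure μ) {K : ℕ} {w : X → ℕ} :
    faJ μ K w ≤ K := by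
  have h : faJ μ K w ≤ ∑ _k ∈ Finset.Icc 1 K, (1 : ℝ) :=
    Finset.sum_le_sum fun k _ => fa_le_one hμ _
  rw [Finset.sum_const, Nat.card_Icc, nsmul_eq_mul] at h
  simpa using h

lemma faJ_const_one {μ : Set X → ℝ} (hμ : IsFAPMeasure μ) {K : ℕ} (hK : 1 ≤ K) :
    faJ μ K (fun _ => 1) = 1 := by
  unfold faJ
  rw [Finset.sum_eq_single_of_mem 1 (Finset.mem_Icc.mpr ⟨le_refl 1, hK⟩)]
  · have : {x : X | 1 ≤ 1} = Set.univ := by ext; simp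
    rw [this, hμ.1]
  · intro k hk hk1
    rw [Finset.mem_Icc] at hk
    have : {x : X | k ≤ 1} = ∅ := by
      ext x; simp only [Set.mem_setOf_eq, Set.mem_empty_iff_false, iff_false]; omega
    rw [this, fa_empty hμ]

/-- Quantized approximation to the integral of `f` against `μ`. -/
noncomputable def faS (μ : Set X → ℝ) (f : X → ℝ) (n : ℕ) : ℝ :=
  faJ μ (n + 2) (fun x => ⌊(n : ℝ) * f x⌋₊) / n

lemma faS_nonneg {μ : Set X → ℝ} (hμ : IsFAPMeasure μ) (f : X → ℝ) (n : ℕ) :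
    0 ≤ faS μ f n :=
  div_nonneg (faJ_nonneg hμ) (Nat.cast_nonneg n)

lemma faS_le_three {μ : Set X → ℝ} (hμ : IsFAPMeasure μ) (f : X → ℝ) {n : ℕ} (hn : 1 ≤ n) :
    faS μ f n ≤ 3 := by
  have hn' : (0 : ℝ) < n := by exact_mod_cast hn
  have h1 : faJ μ (n + 2) (fun x => ⌊(n : ℝ) * f x⌋₊) ≤ ((n : ℝ) + 2) := by
    have := faJ_le hμ (K := n + 2) (w := fun x => ⌊(n : ℝ) * f x⌋₊)
    push_cast at this ⊢
    linarith
  rw [faS, div_le_iff₀ hn']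
  have : (n : ℝ) + 2 ≤ 3 * n := by
    have : (1 : ℝ) ≤ n := by exact_mod_cast hn
    linarith
  linarith

lemma faS_const_one {μ : Set X → ℝ} (hμ : IsFAPMeasure μ) {n : ℕ} (hn : 1 ≤ n) :
    faS μ (fun _ => 1) n = 1 := by
  have hn' : (0 : ℝ) < n := by exact_mod_cast hn
  have hfl : (fun x : X => ⌊(n : ℝ) * (1 : ℝ)⌋₊) = fun _ => n := by
    funext x; rw [mul_one, Nat.floor_natCast]
  rw [faS]
  have : faJ μ (n + 2) (fun x : X => ⌊(n : ℝ) * (1 : ℝ)⌋₊) = n := by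
    rw [hfl]
    unfold faJ
    have hterm : ∀ k ∈ Finset.Icc 1 (n + 2), μ {x : X | k ≤ n} = if k ≤ n then 1 else 0 := by
      intro k _
      by_cases h : k ≤ n
      · rw [if_pos h]
        have : {x : X | k ≤ n} = Set.univ := by ext; simpa using h
        rw [this, hμ.1]
      · rw [if_neg h]
        have : {x : X | k ≤ n} = ∅ := by
          ext x; simp only [Set.mem_setOf_eq, Set.mem_empty_iff_false, iff_false]; omega
        rw [this, fa_empty hμ]
    rw [Finset.sum_congr rfl hterm, ← Finset.sum_filter]
    have : (Finset.Icc 1 (n + 2)).filter (fun k => k ≤ n) = Finset.Icc 1 n := by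
      ext k; simp only [Finset.mem_Icc, Finset.mem_filter]; omega
    rw [this, Finset.sum_const, Nat.card_Icc, nsmul_eq_mul]
    norm_num
  rw [this, div_self (ne_of_gt hn')]

lemma faS_add_error {μ : Set X → ℝ} (hμ : IsFAPMeasure μ) {f g : X → ℝ}
    (hf : ∀ x, 0 ≤ f x) (hg : ∀ x, 0 ≤ g x) (hfg : ∀ x, f x + g x ≤ 1)
    {n : ℕ} (hn : 1 ≤ n) :
    |faS μ (fun x => f x + g x) n - faS μ f n - faS μ g n| ≤ 1 / n := by
  have hn' : (0 : ℝ) < n := by exact_mod_cast hn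
  set uf : X → ℕ := fun x => ⌊(n : ℝ) * f x⌋₊ with huf
  set ug : X → ℕ := fun x => ⌊(n : ℝ) * g x⌋₊ with hug
  set ufg : X → ℕ := fun x => ⌊(n : ℝ) * (f x + g x)⌋₊ with hufg
  have hfx : ∀ x, (0 : ℝ) ≤ (n : ℝ) * f x := fun x => mul_nonneg (le_of_lt hn') (hf x)
  have hgx : ∀ x, (0 : ℝ) ≤ (n : ℝ) * g x := fun x => mul_nonneg (le_of_lt hn') (hg x)
  have h1 : ∀ x, uf x + ug x ≤ ufg x := by
    intro x
    rw [huf, hug, hufg]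
    apply Nat.le_floor
    push_cast
    rw [mul_add]
    exact add_le_add (Nat.floor_le (hfx x)) (Nat.floor_le (hgx x))
  have h3 : ∀ x, ufg x ≤ n := by
    intro x
    rw [hufg]
    calc ⌊(n : ℝ) * (f x + g x)⌋₊ ≤ ⌊(n : ℝ)⌋₊ := by
          apply Nat.floor_mono
          calc (n : ℝ) * (f x + g x) ≤ (n : ℝ) * 1 :=
                mul_le_mul_of_nonneg_left (hfg x) (le_of_lt hn')
          _ = n := mul_one _
    _ = n := Nat.floor_natCast n
  have h2 : ∀ x, ufg x ≤ uf x + ug x + 1 := by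
    intro x
    have hlt : (n : ℝ) * (f x + g x) < ((uf x + ug x + 2 : ℕ) : ℝ) := by
      have l1 : (n : ℝ) * f x < uf x + 1 := Nat.lt_floor_add_one _
      have l2 : (n : ℝ) * g x < ug x + 1 := Nat.lt_floor_add_one _
      push_cast
      rw [mul_add]
      linarith
    have hnn : (0 : ℝ) ≤ (n : ℝ) * (f x + g x) :=
      mul_nonneg (le_of_lt hn') (by linarith [hf x, hg x])
    have hfl := (Nat.floor_lt hnn).mpr hlt
    simp only [hufg]
    omega
  have bnd1 : ∀ x, uf x + ug x ≤ n + 2 := fun x => le_trans (le_trans (h1 x) (h3 x)) (by omega)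
  have bnd2 : ∀ x, (uf x + ug x) + 1 ≤ n + 2 := fun x => by have := le_trans (h1 x) (h3 x); omega
  have low : faJ μ (n + 2) uf + faJ μ (n + 2) ug ≤ faJ μ (n + 2) ufg := by
    rw [← faJ_add hμ bnd1]
    exact faJ_mono hμ h1
  have high : faJ μ (n + 2) ufg ≤ faJ μ (n + 2) uf + faJ μ (n + 2) ug + 1 := by
    have s1 : faJ μ (n + 2) ufg ≤ faJ μ (n + 2) (fun x => (uf x + ug x) + 1) :=
      faJ_mono hμ h2
    have s2 : faJ μ (n + 2) (fun x => (uf x + ug x) + 1)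
        = faJ μ (n + 2) (fun x => uf x + ug x) + faJ μ (n + 2) (fun _ => 1) :=
      faJ_add hμ bnd2
    have s3 : faJ μ (n + 2) (fun x => uf x + ug x) = faJ μ (n + 2) uf + faJ μ (n + 2) ug :=
      faJ_add hμ bnd1
    have s4 : faJ μ (n + 2) (fun _ : X => 1) = 1 := faJ_const_one hμ (by omega)
    rw [s2, s3, s4] at s1
    exact s1
  have heq : faS μ (fun x => f x + g x) n - faS μ f n - faS μ g n
      = (faJ μ (n + 2) ufg - faJ μ (n + 2) uf - faJ μ (n + 2) ug) / n := by
    rw [faS, faS, faS]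
    ring
  rw [heq, abs_div, abs_of_pos hn']
  have habs : |faJ μ (n + 2) ufg - faJ μ (n + 2) uf - faJ μ (n + 2) ug| ≤ 1 :=
    abs_le.mpr ⟨by linarith, by linarith⟩
  gcongr

lemma faS_comp {μ : Set X → ℝ} (σ : X → X) (hσ : ∀ B : Set X, μ (σ ⁻¹' B) = μ B)
    (f : X → ℝ) (n : ℕ) : faS μ (fun x => f (σ x)) n = faS μ f n := by
  unfold faS faJ
  congr 1
  refine Finset.sum_congr rfl fun k _ => ?_
  have : {x | k ≤ ⌊(n : ℝ) * f (σ x)⌋₊} = σ ⁻¹' {x | k ≤ ⌊(n : ℝ) * f x⌋₊} := rfl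
  rw [this, hσ]

open Classical in
/-- The integral of `f` against `μ`, as an ultrafilter limit of quantized sums. -/
noncomputable def faLim (μ : Set X → ℝ) (f : X → ℝ) : ℝ :=
  if h : ∃ a ∈ Set.Icc (0 : ℝ) 3,
      ↑(Ultrafilter.map (faS μ f) (Ultrafilter.of (Filter.atTop : Filter ℕ))) ≤ nhds a
  then h.choose else 0

lemma faLim_tendsto {μ : Set X → ℝ} (hμ : IsFAPMeasure μ) (f : X → ℝ) :
    Filter.Tendsto (faS μ f) (↑(Ultrafilter.of (Filter.atTop : Filter ℕ)))
      (nhds (faLim μ f)) ∧ 0 ≤ faLim μ f := by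
  have hex : ∃ a ∈ Set.Icc (0 : ℝ) 3,
      ↑(Ultrafilter.map (faS μ f) (Ultrafilter.of (Filter.atTop : Filter ℕ))) ≤ nhds a := by
    apply isCompact_Icc.ultrafilter_le_nhds
    rw [Ultrafilter.coe_map, Filter.le_principal_iff, Filter.mem_map]
    have hsub : Set.Ici 1 ⊆ faS μ f ⁻¹' Set.Icc (0 : ℝ) 3 := by
      intro n hn
      exact ⟨faS_nonneg hμ f n, faS_le_three hμ f hn⟩
    exact Filter.mem_of_superset ((Ultrafilter.of_le _) (Filter.Ici_mem_atTop 1)) hsub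
  constructor
  · rw [faLim, dif_pos hex]
    have := hex.choose_spec.2
    rwa [Filter.Tendsto, ← Ultrafilter.coe_map]
  · rw [faLim, dif_pos hex]
    exact hex.choose_spec.1.1

lemma faLim_const_one {μ : Set X → ℝ} (hμ : IsFAPMeasure μ) :
    faLim μ (fun _ => (1 : ℝ)) = 1 := by
  have h1 := (faLim_tendsto hμ (fun _ => (1 : ℝ))).1
  have h2 : Filter.Tendsto (faS μ (fun _ => (1 : ℝ)))
      (↑(Ultrafilter.of (Filter.atTop : Filter ℕ))) (nhds 1) := by
    apply Filter.Tendsto.congr' _ tendsto_const_nhds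
    apply Filter.eventually_of_mem ((Ultrafilter.of_le _) (Filter.Ici_mem_atTop 1))
    intro n hn
    exact (faS_const_one hμ hn).symm
  exact tendsto_nhds_unique h1 h2

lemma faLim_add {μ : Set X → ℝ} (hμ : IsFAPMeasure μ) {f g : X → ℝ}
    (hf : ∀ x, 0 ≤ f x) (hg : ∀ x, 0 ≤ g x) (hfg : ∀ x, f x + g x ≤ 1) :
    faLim μ (fun x => f x + g x) = faLim μ f + faLim μ g := by
  set U : Ultrafilter ℕ := Ultrafilter.of (Filter.atTop : Filter ℕ) with hU
  have t1 := (faLim_tendsto hμ f).1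
  have t2 := (faLim_tendsto hμ g).1
  have t3 := (faLim_tendsto hμ (fun x => f x + g x)).1
  have hd : Filter.Tendsto
      (fun n => faS μ (fun x => f x + g x) n - faS μ f n - faS μ g n)
      Filter.atTop (nhds 0) := by
    apply squeeze_zero_norm' _ tendsto_one_div_atTop_nhds_zero_nat
    filter_upwards [Filter.Ici_mem_atTop 1] with n hn
    exact faS_add_error hμ hf hg hfg hn
  have hd' : Filter.Tendsto
      (fun n => faS μ (fun x => f x + g x) n - faS μ f n - faS μ g n)
      (↑U) (nhds 0) := hd.mono_left (Ultrafilter.of_le _)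
  have hsum : Filter.Tendsto (faS μ (fun x => f x + g x)) (↑U)
      (nhds (0 + faLim μ f + faLim μ g)) := by
    have := (hd'.add t1).add t2
    refine this.congr fun n => ?_
    ring
  have := tendsto_nhds_unique t3 hsum
  rw [this]; ring

lemma faLim_comp {μ : Set X → ℝ} (hμ : IsFAPMeasure μ) (σ : X → X)
    (hσ : ∀ B : Set X, μ (σ ⁻¹' B) = μ B) (f : X → ℝ) :
    faLim μ (fun x => f (σ x)) = faLim μ f := by
  have t1 := (faLim_tendsto hμ (fun x => f (σ x))).1
  have t2 := (faLim_tendsto hμ f).1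
  have heq : faS μ (fun x => f (σ x)) = faS μ f := funext fun n => faS_comp σ hσ f n
  rw [heq] at t1
  exact tendsto_nhds_unique t1 t2

end FA

/-- If `G` is inner amenable and the centralizer of every non-identity element
is amenable, then `G` is amenable. -/
theorem amenable_of_innerAmenable_of_amenable_centralizers
    (G : Type*) [Group G] (hIA : InnerAmenable G)
    (hcent : ∀ g : G, g ≠ 1 → AmenableGroup (Subgroup.centralizer {g})) :
    AmenableGroup G := by
  classical
  obtain ⟨μ₀, hμ₀, hinv⟩ := hIA
  have conj_mul : ∀ (g g' : G) (x : {h : G // h ≠ 1}), conjNonId g (conjNonId g' x) = conjNonId (g * g') x := by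
    intro g g' x
    apply Subtype.ext
    show g * (g' * x.1 * g'⁻¹) * g⁻¹ = (g * g') * x.1 * (g * g')⁻¹
    group
  have conj_one : ∀ x : {h : G // h ≠ 1}, conjNonId 1 x = x := by
    intro x
    apply Subtype.ext
    show 1 * x.1 * 1⁻¹ = x.1
    group
  letI s : Setoid {h : G // h ≠ 1} := ⟨fun x y => ∃ g, conjNonId g x = y,
    ⟨fun x => ⟨1, conj_one x⟩,
     fun {x y} h => by
       obtain ⟨g, hg⟩ := h
       exact ⟨g⁻¹, by rw [← hg, conj_mul, inv_mul_cancel, conj_one]⟩,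
     fun {x y z} h h' => by
       obtain ⟨g, hg⟩ := h
       obtain ⟨g', hg'⟩ := h'
       exact ⟨g' * g, by rw [← conj_mul, hg, hg']⟩⟩⟩
  set r : {h : G // h ≠ 1} → {h : G // h ≠ 1} := fun x => (⟦x⟧ : Quotient s).out with hr_def
  have hr_conj : ∀ (g : G) (x : {h : G // h ≠ 1}), r (conjNonId g x) = r x := by
    intro g x
    have hmk : (⟦conjNonId g x⟧ : Quotient s) = ⟦x⟧ :=
      Quotient.sound ⟨g⁻¹, by rw [conj_mul, inv_mul_cancel, conj_one]⟩
    simp only [hr_def, hmk]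
  have hrel : ∀ x : {h : G // h ≠ 1}, ∃ g, conjNonId g (r x) = x := fun x => Quotient.mk_out x
  choose t ht using hrel
  have hc : ∀ y : {h : G // h ≠ 1}, ∃ ν : Set ↥(Subgroup.centralizer ({y.1} : Set G)) → ℝ,
      IsFAPMeasure ν ∧ ∀ (c : ↥(Subgroup.centralizer ({y.1} : Set G)))
        (B : Set ↥(Subgroup.centralizer ({y.1} : Set G))), ν ((c * ·) '' B) = ν B :=
    fun y => hcent y.1 y.2
  choose ν hν1 hν2 using hc
  set m : {h : G // h ≠ 1} → Set G → ℝ := fun x A =>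
    ν (r x) {s' : ↥(Subgroup.centralizer ({(r x).1} : Set G)) | t x * (s' : G) ∈ A}
    with hm_def
  have m_univ : ∀ x, m x Set.univ = 1 := by
    intro x
    show ν (r x) {s' | t x * (s' : G) ∈ Set.univ} = 1
    have : {s' : ↥(Subgroup.centralizer ({(r x).1} : Set G)) | t x * (s' : G) ∈ Set.univ}
        = Set.univ := by ext; simp
    rw [this]
    exact (hν1 (r x)).1
  have m_nonneg : ∀ x A, 0 ≤ m x A := fun x A => (hν1 (r x)).2.1 _
  have m_le_one : ∀ x A, m x A ≤ 1 := fun x A => fa_le_one (hν1 (r x)) _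
  have m_add : ∀ x (A B : Set G), Disjoint A B → m x (A ∪ B) = m x A + m x B := by
    intro x A B hAB
    show ν (r x) {s' | t x * (s' : G) ∈ A ∪ B}
      = ν (r x) {s' | t x * (s' : G) ∈ A} + ν (r x) {s' | t x * (s' : G) ∈ B}
    have hsplit : {s' : ↥(Subgroup.centralizer ({(r x).1} : Set G)) | t x * (s' : G) ∈ A ∪ B}
        = {s' : ↥(Subgroup.centralizer ({(r x).1} : Set G)) | t x * (s' : G) ∈ A}
          ∪ {s' : ↥(Subgroup.centralizer ({(r x).1} : Set G)) | t x * (s' : G) ∈ B} := by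
      ext s'; simp [Set.mem_union]
    have hdisj : Disjoint {s' : ↥(Subgroup.centralizer ({(r x).1} : Set G)) | t x * (s' : G) ∈ A}
        {s' | t x * (s' : G) ∈ B} := by
      rw [Set.disjoint_left]
      intro s' h1 h2
      exact Set.disjoint_left.mp hAB h1 h2
    rw [hsplit, (hν1 (r x)).2.2 _ _ hdisj]
  have key : ∀ (g : G) (y : {h : G // h ≠ 1}) (A : Set G),
      m (conjNonId g y) ((g * ·) '' A) = m y A := by
    intro g y A
    have hr' := hr_conj g y
    have hb := ht (conjNonId g y)
    rw [hr'] at hb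
    have hcomm : (g * t y)⁻¹ * t (conjNonId g y) ∈ Subgroup.centralizer ({(r y).1} : Set G) := by
      have h1 : conjNonId ((g * t y)⁻¹ * t (conjNonId g y)) (r y) = r y := by
        calc conjNonId ((g * t y)⁻¹ * t (conjNonId g y)) (r y)
            = conjNonId (g * t y)⁻¹ (conjNonId (t (conjNonId g y)) (r y)) :=
              (conj_mul _ _ _).symm
          _ = conjNonId (g * t y)⁻¹ (conjNonId g y) := by rw [hb]
          _ = conjNonId (g * t y)⁻¹ (conjNonId g (conjNonId (t y) (r y))) := by rw [ht y]
          _ = conjNonId ((g * t y)⁻¹ * (g * t y)) (r y) := by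
                rw [conj_mul, conj_mul, mul_assoc]
          _ = r y := by rw [inv_mul_cancel, conj_one]
      have h2 : ((g * t y)⁻¹ * t (conjNonId g y)) * (r y).1
            * ((g * t y)⁻¹ * t (conjNonId g y))⁻¹ = (r y).1 :=
        congrArg Subtype.val h1
      rw [Subgroup.mem_centralizer_singleton_iff]
      exact mul_inv_eq_iff_eq_mul.mp h2
    set s₀ : ↥(Subgroup.centralizer ({(r y).1} : Set G)) :=
      ⟨(g * t y)⁻¹ * t (conjNonId g y), hcomm⟩ with hs₀
    show ν (r (conjNonId g y))
        {s' | t (conjNonId g y) * (s' : G) ∈ (g * ·) '' A}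
      = ν (r y) {s' | t y * (s' : G) ∈ A}
    rw [hr']
    have hset : {s' : ↥(Subgroup.centralizer ({(r y).1} : Set G)) |
        t (conjNonId g y) * (s' : G) ∈ (g * ·) '' A}
        = (fun s' => s₀⁻¹ * s') '' {s' | t y * (s' : G) ∈ A} := by
      conv_rhs => rw [Set.image_mul_left]
      rw [inv_inv]
      ext s'
      simp only [Set.mem_setOf_eq, Set.mem_preimage, Set.image_mul_left]
      have hval : ((s₀ * s' : ↥(Subgroup.centralizer ({(r y).1} : Set G))) : G)
          = ((g * t y)⁻¹ * t (conjNonId g y)) * (s' : G) := rfl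
      have hgroup : t y * (((g * t y)⁻¹ * t (conjNonId g y)) * (s' : G))
          = g⁻¹ * (t (conjNonId g y) * (s' : G)) := by group
      rw [hval, hgroup]
    rw [hset, hν2 (r y) s₀⁻¹]
  refine ⟨fun A => faLim μ₀ (fun x => m x A), ⟨?_, ?_, ?_⟩, ?_⟩
  · show faLim μ₀ (fun x => m x Set.univ) = 1
    have h1 : (fun x => m x Set.univ) = fun _ : {h : G // h ≠ 1} => (1 : ℝ) := funext m_univ
    rw [h1, faLim_const_one hμ₀]
  · intro A
    show 0 ≤ faLim μ₀ (fun x => m x A)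
    exact (faLim_tendsto hμ₀ (fun x => m x A)).2
  · intro A B hAB
    show faLim μ₀ (fun x => m x (A ∪ B))
      = faLim μ₀ (fun x => m x A) + faLim μ₀ (fun x => m x B)
    have hpt : (fun x => m x (A ∪ B)) = fun x => m x A + m x B :=
      funext fun x => m_add x A B hAB
    rw [hpt]
    exact faLim_add hμ₀ (fun x => m_nonneg x A) (fun x => m_nonneg x B)
      (fun x => by rw [← m_add x A B hAB]; exact m_le_one x _)
  · intro g A
    have conj_inv_cancel : ∀ x : {h : G // h ≠ 1}, conjNonId g (conjNonId g⁻¹ x) = x := by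
      intro x; rw [conj_mul, mul_inv_cancel, conj_one]
    have conj_inv_cancel' : ∀ x : {h : G // h ≠ 1}, conjNonId g⁻¹ (conjNonId g x) = x := by
      intro x; rw [conj_mul, inv_mul_cancel, conj_one]
    have hpt : (fun x => m x ((g * ·) '' A)) = fun x => m (conjNonId g⁻¹ x) A := by
      funext x
      have hk := key g (conjNonId g⁻¹ x) A
      rw [conj_inv_cancel x] at hk
      exact hk
    have hσ : ∀ B : Set {h : G // h ≠ 1}, μ₀ ((conjNonId g⁻¹) ⁻¹' B) = μ₀ B := by
      intro B
      have : (conjNonId g⁻¹) ⁻¹' B = conjNonId g '' B := by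
        ext x
        simp only [Set.mem_preimage, Set.mem_image]
        constructor
        · intro h
          exact ⟨conjNonId g⁻¹ x, h, conj_inv_cancel x⟩
        · rintro ⟨y, hy, rfl⟩
          rwa [conj_inv_cancel' y]
      rw [this, hinv]
    show faLim μ₀ (fun x => m x ((g * ·) '' A)) = faLim μ₀ (fun x => m x A)
    rw [hpt]
    exact faLim_comp hμ₀ (conjNonId g⁻¹) hσ (fun x => m x A)
end

section
/- Every inner amenable commutative transitive group is amenable. -/
section Aux

variable {X : Type*} {m : Set X → ℝ}

theorem FAP.empty (hm : IsFAPMeasure m) : m ∅ = 0 := by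
  have h := hm.2.2 ∅ ∅ (disjoint_bot_left)
  simp at h; linarith

theorem FAP.mono (hm : IsFAPMeasure m) {A B : Set X} (h : A ⊆ B) : m A ≤ m B := by
  have hd : Disjoint A (B \ A) := Set.disjoint_sdiff_right
  have hu : A ∪ (B \ A) = B := Set.union_diff_cancel h
  have := hm.2.2 A (B \ A) hd
  rw [hu] at this
  have := hm.2.1 (B \ A)
  linarith

theorem FAP.le_one (hm : IsFAPMeasure m) (A : Set X) : m A ≤ 1 := by
  have := FAP.mono hm (Set.subset_univ A)
  rw [hm.1] at this; exact this

open Classical in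
theorem FAP.sum {ι : Type*} (hm : IsFAPMeasure m) (s : Finset ι) (D : ι → Set X)
    (hd : ∀ i ∈ s, ∀ j ∈ s, i ≠ j → Disjoint (D i) (D j)) :
    m (⋃ i ∈ s, D i) = ∑ i ∈ s, m (D i) := by
  induction s using Finset.induction_on with
  | empty => simpa using FAP.empty hm
  | @insert a s ha ih =>
    rw [Finset.sum_insert ha, Finset.set_biUnion_insert]
    rw [← ih (fun i hi j hj hij => hd i (Finset.mem_insert_of_mem hi) j
      (Finset.mem_insert_of_mem hj) hij)]
    apply hm.2.2
    apply Set.disjoint_iUnion₂_right.2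
    intro i hi
    exact hd a (Finset.mem_insert_self a s) i (Finset.mem_insert_of_mem hi)
      (fun h => ha (h ▸ hi))

open Classical in
theorem FAP.domination {ι κ : Type*} (hm : IsFAPMeasure m)
    (s : Finset ι) (A : ι → Set X) (a : ι → ℕ)
    (t : Finset κ) (B : κ → Set X) (b : κ → ℕ)
    (hpt : ∀ x : X, ∑ i ∈ s, (if x ∈ A i then a i else 0) ≤
      ∑ j ∈ t, (if x ∈ B j then b j else 0)) :
    ∑ i ∈ s, (a i : ℝ) * m (A i) ≤ ∑ j ∈ t, (b j : ℝ) * m (B j) := by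
  set sig : X → Finset ι × Finset κ :=
    fun x => (s.filter (fun i => x ∈ A i), t.filter (fun j => x ∈ B j)) with hsig
  set E : Finset (Finset ι × Finset κ) := s.powerset ×ˢ t.powerset with hE
  set atom : Finset ι × Finset κ → Set X := fun p => sig ⁻¹' {p} with hatom
  have hdisj : ∀ p ∈ E, ∀ q ∈ E, p ≠ q → Disjoint (atom p) (atom q) := by
    intro p _ q _ hpq
    simp only [hatom, Set.disjoint_left]
    intro x hx hx'
    exact hpq (by rw [← hx, ← hx'])
  have hmem : ∀ x, sig x ∈ E := by
    intro x
    simp only [hE, Finset.mem_product, Finset.mem_powerset, hsig]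
    exact ⟨Finset.filter_subset _ _, Finset.filter_subset _ _⟩
  -- measure of A i as a sum over atoms
  have hA : ∀ i ∈ s, m (A i) = ∑ p ∈ E, (if i ∈ p.1 then m (atom p) else 0) := by
    intro i hi
    rw [← Finset.sum_filter]
    rw [← FAP.sum hm _ atom (fun p hp q hq hpq => hdisj p (Finset.mem_filter.1 hp).1
      q (Finset.mem_filter.1 hq).1 hpq)]
    congr 1
    ext x
    simp only [Set.mem_iUnion, Finset.mem_filter, hatom, Set.mem_preimage,
      Set.mem_singleton_iff]
    constructor
    · intro hx
      exact ⟨sig x, ⟨⟨hmem x, by simp [hsig, hi, hx]⟩, rfl⟩⟩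
    · rintro ⟨p, ⟨⟨_, hip⟩, hsx⟩⟩
      have := hsx ▸ hip
      simp only [hsig, Finset.mem_filter] at this
      exact this.2
  have hB : ∀ j ∈ t, m (B j) = ∑ p ∈ E, (if j ∈ p.2 then m (atom p) else 0) := by
    intro j hj
    rw [← Finset.sum_filter]
    rw [← FAP.sum hm _ atom (fun p hp q hq hpq => hdisj p (Finset.mem_filter.1 hp).1
      q (Finset.mem_filter.1 hq).1 hpq)]
    congr 1
    ext x
    simp only [Set.mem_iUnion, Finset.mem_filter, hatom, Set.mem_preimage,
      Set.mem_singleton_iff]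
    constructor
    · intro hx
      exact ⟨sig x, ⟨⟨hmem x, by simp [hsig, hj, hx]⟩, rfl⟩⟩
    · rintro ⟨p, ⟨⟨_, hip⟩, hsx⟩⟩
      have := hsx ▸ hip
      simp only [hsig, Finset.mem_filter] at this
      exact this.2
  calc ∑ i ∈ s, (a i : ℝ) * m (A i)
      = ∑ p ∈ E, (∑ i ∈ s, (if i ∈ p.1 then (a i : ℝ) else 0)) * m (atom p) := by
        have h1 : ∀ i ∈ s, (a i : ℝ) * m (A i)
            = ∑ p ∈ E, (if i ∈ p.1 then (a i : ℝ) * m (atom p) else 0) := by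
          intro i hi
          rw [hA i hi, Finset.mul_sum]
          exact Finset.sum_congr rfl (fun p _ => by rw [mul_ite, mul_zero])
        rw [Finset.sum_congr rfl h1, Finset.sum_comm]
        apply Finset.sum_congr rfl
        intro p _
        rw [Finset.sum_mul]
        exact Finset.sum_congr rfl (fun i _ => by rw [ite_mul, zero_mul])
    _ ≤ ∑ p ∈ E, (∑ j ∈ t, (if j ∈ p.2 then (b j : ℝ) else 0)) * m (atom p) := by
        apply Finset.sum_le_sum
        intro p hp
        by_cases hne : (atom p).Nonempty
        · obtain ⟨x, hx⟩ := hne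
          apply mul_le_mul_of_nonneg_right _ (hm.2.1 _)
          simp only [hatom, Set.mem_preimage, Set.mem_singleton_iff] at hx
          have h1 : ∑ i ∈ s, (if i ∈ p.1 then (a i : ℝ) else 0)
              = ((∑ i ∈ s, if x ∈ A i then a i else 0 : ℕ) : ℝ) := by
            push_cast
            apply Finset.sum_congr rfl
            intro i hi
            rw [← hx]
            simp [hsig, Finset.mem_filter, hi]
          have h2 : ∑ j ∈ t, (if j ∈ p.2 then (b j : ℝ) else 0)
              = ((∑ j ∈ t, if x ∈ B j then b j else 0 : ℕ) : ℝ) := by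
            push_cast
            apply Finset.sum_congr rfl
            intro j hj
            rw [← hx]
            simp [hsig, Finset.mem_filter, hj]
          rw [h1, h2]
          exact_mod_cast hpt x
        · have : atom p = ∅ := Set.not_nonempty_iff_eq_empty.1 hne
          rw [this, FAP.empty hm, mul_zero, mul_zero]
    _ = ∑ j ∈ t, (b j : ℝ) * m (B j) := by
        have h1 : ∀ j ∈ t, (b j : ℝ) * m (B j)
            = ∑ p ∈ E, (if j ∈ p.2 then (b j : ℝ) * m (atom p) else 0) := by
          intro j hj
          rw [hB j hj, Finset.mul_sum]
          exact Finset.sum_congr rfl (fun p _ => by rw [mul_ite, mul_zero])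
        rw [Finset.sum_congr rfl h1, Finset.sum_comm]
        apply Finset.sum_congr rfl
        intro p _
        rw [Finset.sum_mul]
        exact Finset.sum_congr rfl (fun j _ => by rw [ite_mul, zero_mul])

/-- lower sums for the finitely additive integral -/
noncomputable def FAP.LS (m : Set X → ℝ) (f : X → ℝ) (n : ℕ) : ℝ :=
  (∑ k ∈ Finset.Icc 1 n, m {x | (k : ℝ) / n ≤ f x}) / n

/-- the finitely additive integral of a `[0,1]`-valued function -/
noncomputable def FAP.I (m : Set X → ℝ) (f : X → ℝ) : ℝ :=
  ⨆ n : ℕ, (FAP.LS m f (n + 1) - 1 / (n + 1))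

open Classical in
theorem FAP.count_eq (f : X → ℝ) (hf0 : ∀ x, 0 ≤ f x) (hf1 : ∀ x, f x ≤ 1)
    {n : ℕ} (hn : 1 ≤ n) (x : X) (w : ℕ) :
    ∑ k ∈ Finset.Icc 1 n, (if x ∈ {y | (k : ℝ) / n ≤ f y} then w else 0)
      = w * ⌊(n : ℝ) * f x⌋₊ := by
  have hnpos : (0:ℝ) < n := by exact_mod_cast hn
  have hfloor_le : ⌊(n : ℝ) * f x⌋₊ ≤ n := by
    calc ⌊(n : ℝ) * f x⌋₊ ≤ ⌊(n : ℝ)⌋₊ := Nat.floor_le_floor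
          (by nlinarith [hf1 x])
      _ = n := Nat.floor_natCast n
  have hfil : (Finset.Icc 1 n).filter (fun k : ℕ => x ∈ {y | (k : ℝ) / n ≤ f y})
      = Finset.Icc 1 ⌊(n : ℝ) * f x⌋₊ := by
    ext k
    simp only [Finset.mem_filter, Finset.mem_Icc, Set.mem_setOf_eq]
    constructor
    · rintro ⟨⟨h1, h2⟩, h3⟩
      refine ⟨h1, Nat.le_floor ?_⟩
      rw [div_le_iff₀ hnpos] at h3
      push_cast
      linarith
    · rintro ⟨h1, h2⟩
      have h3 : (k : ℝ) ≤ (n : ℝ) * f x := by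
        calc (k : ℝ) ≤ (⌊(n : ℝ) * f x⌋₊ : ℝ) := by exact_mod_cast h2
          _ ≤ (n : ℝ) * f x := Nat.floor_le (by have := hf0 x; positivity)
      exact ⟨⟨h1, le_trans h2 hfloor_le⟩, by rw [div_le_iff₀ hnpos]; linarith⟩
  rw [← Finset.sum_filter (fun k : ℕ => x ∈ {y | (k : ℝ) / n ≤ f y}) (fun _ => w), hfil]
  rw [Finset.sum_const, Nat.card_Icc, smul_eq_mul]
  have h : ⌊(n : ℝ) * f x⌋₊ + 1 - 1 = ⌊(n : ℝ) * f x⌋₊ := by omega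
  rw [h, mul_comm]

theorem FAP.LS_nonneg (hm : IsFAPMeasure m) (f : X → ℝ) (n : ℕ) :
    0 ≤ FAP.LS m f n := by
  apply div_nonneg _ (Nat.cast_nonneg n)
  exact Finset.sum_nonneg (fun k _ => hm.2.1 _)

theorem FAP.LS_le_one (hm : IsFAPMeasure m) (f : X → ℝ) {n : ℕ} (hn : 1 ≤ n) :
    FAP.LS m f n ≤ 1 := by
  have hnpos : (0:ℝ) < n := by exact_mod_cast hn
  rw [FAP.LS, div_le_one hnpos]
  calc ∑ k ∈ Finset.Icc 1 n, m {x | (k : ℝ) / n ≤ f x}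
      ≤ ∑ k ∈ Finset.Icc 1 n, 1 := Finset.sum_le_sum (fun k _ => FAP.le_one hm _)
    _ = n := by simp

theorem FAP.LS_le (hm : IsFAPMeasure m) (f : X → ℝ)
    (hf0 : ∀ x, 0 ≤ f x) (hf1 : ∀ x, f x ≤ 1) {n p : ℕ} (hn : 1 ≤ n) (hp : 1 ≤ p) :
    FAP.LS m f n ≤ FAP.LS m f p + 1 / p := by
  classical
  have hnpos : (0:ℝ) < n := by exact_mod_cast hn
  have hppos : (0:ℝ) < p := by exact_mod_cast hp
  have key : ∑ k ∈ Finset.Icc 1 n, (p : ℝ) * m {x | (k : ℝ) / n ≤ f x}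
      ≤ ∑ j ∈ Finset.Icc 0 p, (n : ℝ) *
        m (if j = 0 then Set.univ else {x | (j : ℝ) / p ≤ f x}) := by
    apply FAP.domination hm _ _ (fun _ => p) _ _ (fun _ => n)
    intro x
    rw [FAP.count_eq f hf0 hf1 hn x p]
    have hsplit : Finset.Icc 0 p = insert 0 (Finset.Icc 1 p) := by
      ext j; simp [Finset.mem_Icc, Finset.mem_insert]; omega
    rw [hsplit, Finset.sum_insert (by simp)]
    simp only [if_pos rfl, Set.mem_univ, if_true]
    have hsum : ∑ j ∈ Finset.Icc 1 p,
        (if x ∈ (if j = 0 then Set.univ else {y | (j : ℝ) / p ≤ f y}) then n else 0)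
        = ∑ j ∈ Finset.Icc 1 p, (if x ∈ {y | (j : ℝ) / p ≤ f y} then n else 0) := by
      apply Finset.sum_congr rfl
      intro j hj
      have : j ≠ 0 := by simp [Finset.mem_Icc] at hj; omega
      rw [if_neg this]
    rw [hsum, FAP.count_eq f hf0 hf1 hp x n]
    -- p * ⌊n c⌋ ≤ n + n * ⌊p c⌋
    set c := f x
    have hc0 : 0 ≤ c := hf0 x
    have h1 : p * ⌊(n : ℝ) * c⌋₊ ≤ ⌊(p : ℝ) * ((n:ℝ) * c)⌋₊ := by
      apply Nat.le_floor
      push_cast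
      have := Nat.floor_le (a := (n:ℝ)*c) (by positivity)
      nlinarith
    have h2 : ⌊(p : ℝ) * ((n:ℝ) * c)⌋₊ < n * (⌊(p : ℝ) * c⌋₊ + 1) := by
      rw [Nat.floor_lt (by positivity)]
      have := Nat.lt_floor_add_one ((p:ℝ) * c)
      push_cast
      nlinarith
    have h3 : n * (⌊(p : ℝ) * c⌋₊ + 1) = n * ⌊(p : ℝ) * c⌋₊ + n := by ring
    omega
  -- rewrite the RHS
  have hrhs : ∑ j ∈ Finset.Icc 0 p, (n : ℝ) *
        m (if j = 0 then Set.univ else {x | (j : ℝ) / p ≤ f x})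
      = n + ∑ j ∈ Finset.Icc 1 p, (n : ℝ) * m {x | (j : ℝ) / p ≤ f x} := by
    have hsplit : Finset.Icc 0 p = insert 0 (Finset.Icc 1 p) := by
      ext j; simp [Finset.mem_Icc, Finset.mem_insert]; omega
    rw [hsplit, Finset.sum_insert (by simp)]
    rw [if_pos rfl, hm.1, mul_one]
    congr 1
    apply Finset.sum_congr rfl
    intro j hj
    have : j ≠ 0 := by simp [Finset.mem_Icc] at hj; omega
    rw [if_neg this]
  rw [hrhs] at key
  rw [← Finset.mul_sum, ← Finset.mul_sum] at key
  have hLSn : ∑ k ∈ Finset.Icc 1 n, m {x | (k : ℝ) / n ≤ f x} = n * FAP.LS m f n := by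
    rw [FAP.LS]; field_simp
  have hLSp : ∑ k ∈ Finset.Icc 1 p, m {x | (k : ℝ) / p ≤ f x} = p * FAP.LS m f p := by
    rw [FAP.LS]; field_simp
  rw [hLSn, hLSp] at key
  have hinv : (p:ℝ) * (1 / p) = 1 := by field_simp
  nlinarith [key, hnpos, hppos, hinv, mul_pos hnpos hppos]

theorem FAP.aux_nonpos {a C : ℝ} (hC : 0 ≤ C) (h : ∀ n : ℕ, 1 ≤ n → a ≤ C / n) :
    a ≤ 0 := by
  by_contra hpos
  push_neg at hpos
  obtain ⟨n, hn⟩ := exists_nat_gt (C / a)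
  have hn1 : 1 ≤ n := by
    by_contra h0
    interval_cases n
    · simp at hn; nlinarith [div_nonneg hC (le_of_lt hpos)]
  have h1 := h n hn1
  have hnpos : (0:ℝ) < n := by exact_mod_cast hn1
  rw [div_lt_iff₀ hpos] at hn
  rw [le_div_iff₀ hnpos] at h1
  nlinarith

theorem FAP.aux_eq_zero {a C : ℝ} (hC : 0 ≤ C) (h : ∀ n : ℕ, 1 ≤ n → |a| ≤ C / n) :
    a = 0 := by
  have h1 : a ≤ 0 := FAP.aux_nonpos hC (fun n hn => le_trans (le_abs_self a) (h n hn))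
  have h2 : -a ≤ 0 := FAP.aux_nonpos hC (fun n hn => le_trans (neg_le_abs a) (h n hn))
  linarith

theorem FAP.I_bdd (hm : IsFAPMeasure m) (f : X → ℝ)
    (hf0 : ∀ x, 0 ≤ f x) (hf1 : ∀ x, f x ≤ 1) :
    BddAbove (Set.range (fun n : ℕ => FAP.LS m f (n + 1) - 1 / (n + 1))) := by
  refine ⟨1, ?_⟩
  rintro y ⟨n, rfl⟩
  have h1 := FAP.LS_le_one hm f (n := n + 1) (by omega)
  have : (0:ℝ) < (n:ℝ) + 1 := by positivity
  have h2 : 0 ≤ 1 / ((n:ℝ)+1) := by positivity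
  simp only
  push_cast
  linarith

theorem FAP.I_close (hm : IsFAPMeasure m) (f : X → ℝ)
    (hf0 : ∀ x, 0 ≤ f x) (hf1 : ∀ x, f x ≤ 1) {p : ℕ} (hp : 1 ≤ p) :
    FAP.LS m f p - 1 / p ≤ FAP.I m f ∧ FAP.I m f ≤ FAP.LS m f p + 1 / p := by
  constructor
  · have := le_ciSup (FAP.I_bdd hm f hf0 hf1) (p - 1)
    rw [FAP.I]
    have hcast : (p - 1 : ℕ) + 1 = p := by omega
    have hcast2 : ((p - 1 : ℕ) : ℝ) + 1 = (p : ℝ) := by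
      have : ((p - 1 : ℕ) : ℝ) = (p : ℝ) - 1 := by
        have : (1:ℕ) ≤ p := hp
        push_cast [this]
        ring
      rw [this]; ring
    rw [hcast] at this
    simpa [hcast2] using this
  · rw [FAP.I]
    apply ciSup_le
    intro n
    have h1 := FAP.LS_le hm f hf0 hf1 (n := n + 1) (p := p) (by omega) hp
    have : (0:ℝ) < (n:ℝ) + 1 := by positivity
    have h2 : 0 ≤ 1 / ((n:ℝ)+1) := by positivity
    push_cast
    linarith

theorem FAP.I_nonneg (hm : IsFAPMeasure m) (f : X → ℝ)
    (hf0 : ∀ x, 0 ≤ f x) (hf1 : ∀ x, f x ≤ 1) : 0 ≤ FAP.I m f := by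
  have h : ∀ n : ℕ, 1 ≤ n → -FAP.I m f ≤ 1 / n := by
    intro n hn
    have h1 := (FAP.I_close hm f hf0 hf1 hn).1
    have h2 := FAP.LS_nonneg hm f n
    linarith
  linarith [FAP.aux_nonpos zero_le_one h]

theorem FAP.LS_one (hm : IsFAPMeasure m) (f : X → ℝ) (hf : ∀ x, f x = 1)
    {n : ℕ} (hn : 1 ≤ n) : FAP.LS m f n = 1 := by
  have hnpos : (0:ℝ) < n := by exact_mod_cast hn
  rw [FAP.LS]
  rw [div_eq_one_iff_eq (ne_of_gt hnpos)]
  have : ∀ k ∈ Finset.Icc 1 n, m {x | (k:ℝ)/n ≤ f x} = 1 := by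
    intro k hk
    simp only [Finset.mem_Icc] at hk
    have : {x | (k:ℝ)/n ≤ f x} = Set.univ := by
      ext x
      simp only [Set.mem_setOf_eq, Set.mem_univ, iff_true, hf x]
      rw [div_le_one hnpos]
      exact_mod_cast hk.2
    rw [this, hm.1]
  rw [Finset.sum_congr rfl this]
  simp

theorem FAP.I_one (hm : IsFAPMeasure m) (f : X → ℝ) (hf : ∀ x, f x = 1) :
    FAP.I m f = 1 := by
  have hf0 : ∀ x, 0 ≤ f x := fun x => by rw [hf x]; norm_num
  have hf1 : ∀ x, f x ≤ 1 := fun x => by rw [hf x]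
  have : FAP.I m f - 1 = 0 := by
    apply FAP.aux_eq_zero (C := 1) zero_le_one
    intro n hn
    obtain ⟨h1, h2⟩ := FAP.I_close hm f hf0 hf1 hn
    rw [FAP.LS_one hm f hf hn] at h1 h2
    rw [abs_le]
    constructor <;> [linarith; linarith]
  linarith

open Classical in
theorem FAP.LS_add (hm : IsFAPMeasure m) (f g h : X → ℝ)
    (hfg : ∀ x, h x = f x + g x) (hf0 : ∀ x, 0 ≤ f x) (hg0 : ∀ x, 0 ≤ g x)
    (hh1 : ∀ x, h x ≤ 1) {n : ℕ} (hn : 1 ≤ n) :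
    |FAP.LS m f n + FAP.LS m g n - FAP.LS m h n| ≤ 1 / n := by
  have hnpos : (0:ℝ) < n := by exact_mod_cast hn
  have hf1 : ∀ x, f x ≤ 1 := fun x => by have := hg0 x; have := hh1 x; rw [hfg x] at *; linarith
  have hg1 : ∀ x, g x ≤ 1 := fun x => by have := hf0 x; have := hh1 x; rw [hfg x] at *; linarith
  have hh0 : ∀ x, 0 ≤ h x := fun x => by have := hf0 x; have := hg0 x; rw [hfg x]; linarith
  -- lower bound
  have key1 : ∑ i ∈ (Finset.Icc 1 n).disjSum (Finset.Icc 1 n),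
      ((1:ℕ) : ℝ) * m (Sum.elim (fun k : ℕ => {x | (k:ℝ)/n ≤ f x})
        (fun k : ℕ => {x | (k:ℝ)/n ≤ g x}) i)
      ≤ ∑ k ∈ Finset.Icc 1 n, ((1:ℕ) : ℝ) * m {x | (k:ℝ)/n ≤ h x} := by
    apply FAP.domination hm
    intro x
    rw [Finset.sum_disjSum]
    simp only [Sum.elim_inl, Sum.elim_inr]
    erw [FAP.count_eq f hf0 hf1 hn x 1, FAP.count_eq g hg0 hg1 hn x 1,
      FAP.count_eq h hh0 hh1 hn x 1]
    simp only [one_mul]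
    apply Nat.le_floor
    push_cast
    have h1 := Nat.floor_le (a := (n:ℝ) * f x) (by have := hf0 x; positivity)
    have h2 := Nat.floor_le (a := (n:ℝ) * g x) (by have := hg0 x; positivity)
    have : (n:ℝ) * h x = (n:ℝ) * f x + (n:ℝ) * g x := by rw [hfg x]; ring
    linarith
  -- upper bound
  have key2 : ∑ k ∈ Finset.Icc 1 n, ((1:ℕ) : ℝ) * m {x | (k:ℝ)/n ≤ h x}
      ≤ ∑ i ∈ (Finset.Icc 1 n).disjSum (Finset.Icc 0 n),
      ((1:ℕ) : ℝ) * m (Sum.elim (fun k : ℕ => {x | (k:ℝ)/n ≤ f x})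
        (fun j : ℕ => if j = 0 then Set.univ else {x | (j:ℝ)/n ≤ g x}) i) := by
    apply FAP.domination hm
    intro x
    rw [Finset.sum_disjSum]
    simp only [Sum.elim_inl, Sum.elim_inr]
    erw [FAP.count_eq f hf0 hf1 hn x 1, FAP.count_eq h hh0 hh1 hn x 1]
    have hsplit : Finset.Icc 0 n = insert 0 (Finset.Icc 1 n) := by
      ext j; simp [Finset.mem_Icc, Finset.mem_insert]; omega
    rw [hsplit, Finset.sum_insert (by simp)]
    simp only [if_pos rfl, Set.mem_univ, if_true]
    have hsum : ∑ j ∈ Finset.Icc 1 n,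
        (if x ∈ (if j = 0 then Set.univ else {y | (j : ℝ) / n ≤ g y}) then 1 else 0)
        = ∑ j ∈ Finset.Icc 1 n, (if x ∈ {y | (j : ℝ) / n ≤ g y} then 1 else 0) := by
      apply Finset.sum_congr rfl
      intro j hj
      have : j ≠ 0 := by simp [Finset.mem_Icc] at hj; omega
      rw [if_neg this]
    erw [hsum, FAP.count_eq g hg0 hg1 hn x 1]
    simp only [one_mul]
    have hfl : ⌊(n:ℝ) * h x⌋₊ < ⌊(n:ℝ) * f x⌋₊ + (1 + ⌊(n:ℝ) * g x⌋₊) + 1 := by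
      rw [Nat.floor_lt (by have := hh0 x; positivity)]
      have h1 := Nat.lt_floor_add_one ((n:ℝ) * f x)
      have h2 := Nat.lt_floor_add_one ((n:ℝ) * g x)
      have : (n:ℝ) * h x = (n:ℝ) * f x + (n:ℝ) * g x := by rw [hfg x]; ring
      push_cast
      linarith
    omega
  -- translate into LS
  have e1 : ∀ u : X → ℝ, ∑ k ∈ Finset.Icc 1 n, ((1:ℕ):ℝ) * m {x | (k:ℝ)/n ≤ u x}
      = n * FAP.LS m u n := by
    intro u
    simp only [Nat.cast_one, one_mul]
    rw [FAP.LS]; field_simp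
  have e2 : ∑ i ∈ (Finset.Icc 1 n).disjSum (Finset.Icc 1 n),
      ((1:ℕ) : ℝ) * m (Sum.elim (fun k : ℕ => {x | (k:ℝ)/n ≤ f x})
        (fun k : ℕ => {x | (k:ℝ)/n ≤ g x}) i)
      = n * FAP.LS m f n + n * FAP.LS m g n := by
    rw [Finset.sum_disjSum]
    simp only [Sum.elim_inl, Sum.elim_inr]
    rw [e1 f, e1 g]
  have e3 : ∑ i ∈ (Finset.Icc 1 n).disjSum (Finset.Icc 0 n),
      ((1:ℕ) : ℝ) * m (Sum.elim (fun k : ℕ => {x | (k:ℝ)/n ≤ f x})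
        (fun j : ℕ => if j = 0 then Set.univ else {x | (j:ℝ)/n ≤ g x}) i)
      = n * FAP.LS m f n + (1 + n * FAP.LS m g n) := by
    rw [Finset.sum_disjSum]
    simp only [Sum.elim_inl, Sum.elim_inr]
    rw [e1 f]
    congr 1
    have hsplit : Finset.Icc 0 n = insert 0 (Finset.Icc 1 n) := by
      ext j; simp [Finset.mem_Icc, Finset.mem_insert]; omega
    rw [hsplit, Finset.sum_insert (by simp)]
    rw [if_pos rfl, hm.1]
    simp only [Nat.cast_one, one_mul]
    congr 1
    have : ∀ j ∈ Finset.Icc 1 n,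
        m (if j = 0 then Set.univ else {x | (j:ℝ)/n ≤ g x}) = m {x | (j:ℝ)/n ≤ g x} := by
      intro j hj
      have : j ≠ 0 := by simp [Finset.mem_Icc] at hj; omega
      rw [if_neg this]
    rw [Finset.sum_congr rfl this]
    have := e1 g
    simp only [Nat.cast_one, one_mul] at this
    rw [this]
  rw [e2, e1 h] at key1
  rw [e3, e1 h] at key2
  rw [abs_le]
  have hinv : (n:ℝ) * (1 / n) = 1 := by field_simp
  constructor
  · nlinarith [key1, key2, hnpos, hinv]
  · nlinarith [key1, key2, hnpos, hinv]

theorem FAP.I_add (hm : IsFAPMeasure m) (f g h : X → ℝ)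
    (hfg : ∀ x, h x = f x + g x) (hf0 : ∀ x, 0 ≤ f x) (hg0 : ∀ x, 0 ≤ g x)
    (hh1 : ∀ x, h x ≤ 1) :
    FAP.I m h = FAP.I m f + FAP.I m g := by
  have hf1 : ∀ x, f x ≤ 1 := fun x => by have := hg0 x; have := hh1 x; rw [hfg x] at *; linarith
  have hg1 : ∀ x, g x ≤ 1 := fun x => by have := hf0 x; have := hh1 x; rw [hfg x] at *; linarith
  have hh0 : ∀ x, 0 ≤ h x := fun x => by have := hf0 x; have := hg0 x; rw [hfg x]; linarith
  have key : FAP.I m h - FAP.I m f - FAP.I m g = 0 := by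
    apply FAP.aux_eq_zero (C := 4) (by norm_num)
    intro n hn
    obtain ⟨hf_lo, hf_hi⟩ := FAP.I_close hm f hf0 hf1 hn
    obtain ⟨hg_lo, hg_hi⟩ := FAP.I_close hm g hg0 hg1 hn
    obtain ⟨hh_lo, hh_hi⟩ := FAP.I_close hm h hh0 hh1 hn
    have hLS := FAP.LS_add hm f g h hfg hf0 hg0 hh1 hn
    rw [abs_le] at hLS ⊢
    have hnpos : (0:ℝ) < n := by exact_mod_cast hn
    have h4 : 4 / (n:ℝ) = 4 * (1 / n) := by ring
    rw [h4]
    constructor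
    · linarith [hLS.1, hLS.2]
    · linarith [hLS.1, hLS.2]
  linarith

theorem FAP.I_congr (f g : X → ℝ)
    (h : ∀ c : ℝ, m {x | c ≤ f x} = m {x | c ≤ g x}) : FAP.I m f = FAP.I m g := by
  have hLS : ∀ n, FAP.LS m f n = FAP.LS m g n := by
    intro n
    rw [FAP.LS, FAP.LS]
    congr 1
    exact Finset.sum_congr rfl (fun k _ => h _)
  rw [FAP.I, FAP.I]
  simp only [hLS]


end Aux

theorem geom_growth (c : ℕ → ℝ) (r : ℝ) (hr : 0 < r) :
    ∀ N : ℕ, (∀ i, 1 ≤ i → i ≤ N → r * c i < c (i + 1)) → r ^ N * c 1 < c (N + 1) ∨ N = 0 := by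
  intro N
  induction N with
  | zero => intro _; right; rfl
  | succ N ih =>
    intro h
    left
    rcases ih (fun i hi hiN => h i hi (by omega)) with h1 | h1
    · have h2 := h (N + 1) (by omega) (le_refl _)
      calc r ^ (N + 1) * c 1 = r * (r ^ N * c 1) := by ring
        _ < r * c (N + 1) := by exact mul_lt_mul_of_pos_left h1 hr
        _ < c (N + 2) := h2
    · subst h1
      have h2 := h 1 (le_refl _) (by omega)
      simpa using h2

open Classical in
theorem folner {H : Type*} [Group H] (hc : ∀ a b : H, a * b = b * a) (F : Finset H) :
    ∀ (ε : ℝ), 0 < ε → ∃ Φ : Finset H, Φ.Nonempty ∧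
      ∀ g ∈ F, (((Φ.image (g * ·)) \ Φ).card : ℝ) ≤ ε * (Φ.card : ℝ) := by
  induction F using Finset.induction_on with
  | empty => exact fun ε hε => ⟨{1}, ⟨1, by simp⟩, by simp⟩
  | @insert a F ha ih =>
    intro ε hε
    -- choose N : the number of steps
    obtain ⟨N, hN2, hN1⟩ : ∃ N : ℕ, ((N : ℝ) + 1) < (1 + ε / 2) ^ N ∧ 1 ≤ N := by
      have ht := tendsto_pow_const_div_const_pow_of_one_lt 1 (r := 1 + ε / 2) (by linarith)
      have h2 : ∀ᶠ n : ℕ in Filter.atTop, ((n : ℝ) ^ 1) / (1 + ε / 2) ^ n < 1 / 2 :=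
        ht.eventually_lt_const (by norm_num)
      have h3 : ∀ᶠ n : ℕ in Filter.atTop, 2 ≤ n := Filter.eventually_ge_atTop 2
      obtain ⟨N, hlt, hge⟩ := (h2.and h3).exists
      refine ⟨N, ?_, by omega⟩
      have hpow : (0 : ℝ) < (1 + ε / 2) ^ N := by positivity
      rw [div_lt_iff₀ hpow] at hlt
      have hNR : (2 : ℝ) ≤ (N : ℝ) := by exact_mod_cast hge
      nlinarith
    obtain ⟨Φ, hΦne, hΦ⟩ := ih (ε / N) (by positivity)
    have hΦpos : (0 : ℝ) < Φ.card := by exact_mod_cast Finset.card_pos.2 hΦne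
    set Ψ : ℕ → Finset H := fun i =>
      (Finset.range i).biUnion (fun j => Φ.image (fun x => a ^ j * x)) with hΨ
    have hΨ1 : Ψ 1 = Φ := by
      rw [hΨ]
      simp only [Finset.range_one, Finset.singleton_biUnion, pow_zero, one_mul]
      exact Finset.image_id
    have hsub : ∀ i, 1 ≤ i → Φ ⊆ Ψ i := by
      intro i hi
      rw [← hΨ1]
      apply Finset.biUnion_subset_biUnion_of_subset_left
      intro j hj
      simp only [Finset.mem_range] at *
      omega
    have hΨne : ∀ i, 1 ≤ i → (Ψ i).Nonempty := fun i hi => hΦne.mono (hsub i hi)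
    have hΨcard_ge : ∀ i, 1 ≤ i → Φ.card ≤ (Ψ i).card :=
      fun i hi => Finset.card_le_card (hsub i hi)
    have hmono : ∀ i, Ψ i ⊆ Ψ (i + 1) := by
      intro i
      apply Finset.biUnion_subset_biUnion_of_subset_left
      intro j hj
      simp only [Finset.mem_range] at *
      omega
    have hcard_le : ∀ i, (Ψ i).card ≤ i * Φ.card := by
      intro i
      calc (Ψ i).card ≤ ∑ j ∈ Finset.range i, (Φ.image (fun x => a ^ j * x)).card :=
            Finset.card_biUnion_le
        _ ≤ ∑ j ∈ Finset.range i, Φ.card :=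
            Finset.sum_le_sum (fun j _ => Finset.card_image_le)
        _ = i * Φ.card := by rw [Finset.sum_const, Finset.card_range, smul_eq_mul]
    have haΨ : ∀ i, (Ψ i).image (a * ·) ⊆ Ψ (i + 1) := by
      intro i x hx
      simp only [Finset.mem_image, hΨ, Finset.mem_biUnion, Finset.mem_range] at hx ⊢
      obtain ⟨y, ⟨j, hj, ⟨φ, hφ, rfl⟩⟩, rfl⟩ := hx
      exact ⟨j + 1, by omega, φ, hφ, by rw [← mul_assoc, pow_succ']⟩
    have hgΨ : ∀ g ∈ F, ∀ i, ((Ψ i).image (g * ·) \ Ψ i).card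
        ≤ i * ((Φ.image (g * ·) \ Φ).card) := by
      intro g hg i
      have hsubd : (Ψ i).image (g * ·) \ Ψ i ⊆
          (Finset.range i).biUnion (fun j => (Φ.image (g * ·) \ Φ).image (fun x => a ^ j * x)) := by
        intro x hx
        simp only [Finset.mem_sdiff, Finset.mem_image, hΨ, Finset.mem_biUnion,
          Finset.mem_range] at hx ⊢
        obtain ⟨⟨y, ⟨j, hj, ⟨φ, hφ, rfl⟩⟩, rfl⟩, hnot⟩ := hx
        refine ⟨j, hj, g * φ, ?_, by rw [← mul_assoc, ← mul_assoc, hc g (a ^ j)]⟩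
        exact ⟨⟨φ, hφ, rfl⟩, fun hmem =>
          hnot ⟨j, hj, g * φ, hmem, by rw [← mul_assoc, ← mul_assoc, hc g (a ^ j)]⟩⟩
      calc ((Ψ i).image (g * ·) \ Ψ i).card
          ≤ ((Finset.range i).biUnion
              (fun j => (Φ.image (g * ·) \ Φ).image (fun x => a ^ j * x))).card :=
            Finset.card_le_card hsubd
        _ ≤ ∑ j ∈ Finset.range i, ((Φ.image (g * ·) \ Φ).image (fun x => a ^ j * x)).card :=
            Finset.card_biUnion_le
        _ ≤ ∑ j ∈ Finset.range i, (Φ.image (g * ·) \ Φ).card :=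
            Finset.sum_le_sum (fun j _ => Finset.card_image_le)
        _ = i * (Φ.image (g * ·) \ Φ).card := by
            rw [Finset.sum_const, Finset.card_range, smul_eq_mul]
    -- choose a good index i
    have hgood : ∃ i, 1 ≤ i ∧ i ≤ N ∧ ((Ψ (i + 1)).card : ℝ) ≤ (1 + ε / 2) * (Ψ i).card := by
      by_contra hno
      push_neg at hno
      have hstrict : ∀ i, 1 ≤ i → i ≤ N → (1 + ε / 2) * ((Ψ i).card : ℝ) < (Ψ (i + 1)).card :=
        fun i h1 h2 => hno i h1 h2
      rcases geom_growth (fun i => ((Ψ i).card : ℝ)) (1 + ε / 2) (by linarith) N hstrict with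
        hgg | hgg
      · have h1 : ((Ψ (N + 1)).card : ℝ) ≤ (N + 1) * Φ.card := by
          have := hcard_le (N + 1)
          push_cast
          exact_mod_cast this
        rw [hΨ1] at hgg
        nlinarith
      · omega
    obtain ⟨i, hi1, hiN, hgrow⟩ := hgood
    refine ⟨Ψ i, hΨne i hi1, ?_⟩
    intro g hg
    have hΨipos : (0 : ℝ) < (Ψ i).card := by
      exact_mod_cast Finset.card_pos.2 (hΨne i hi1)
    rcases Finset.mem_insert.1 hg with rfl | hgF
    · -- g = a
      have hsubd : (Ψ i).image (g * ·) \ Ψ i ⊆ Ψ (i + 1) \ Ψ i :=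
        Finset.sdiff_subset_sdiff (haΨ i) (le_refl _)
      have h1 : (((Ψ i).image (g * ·) \ Ψ i).card : ℝ) ≤ (Ψ (i + 1)).card - (Ψ i).card := by
        have h2 := Finset.card_le_card hsubd
        have h3 := Finset.card_sdiff_add_card_eq_card (hmono i)
        have h2' : (((Ψ i).image (g * ·) \ Ψ i).card : ℝ) ≤ ((Ψ (i + 1) \ Ψ i).card : ℝ) := by
          exact_mod_cast h2
        have h3' : ((Ψ (i + 1) \ Ψ i).card : ℝ) + (Ψ i).card = (Ψ (i + 1)).card := by
          exact_mod_cast h3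
        linarith
      calc (((Ψ i).image (g * ·) \ Ψ i).card : ℝ) ≤ (Ψ (i + 1)).card - (Ψ i).card := h1
        _ ≤ (ε / 2) * (Ψ i).card := by linarith
        _ ≤ ε * (Ψ i).card := by nlinarith
    · -- g ∈ F
      have h1 := hgΨ g hgF i
      have h2 := hΦ g hgF
      have hNpos : (0 : ℝ) < N := by exact_mod_cast hN1
      have hiR : (i : ℝ) ≤ N := by exact_mod_cast hiN
      have h1' : (((Ψ i).image (g * ·) \ Ψ i).card : ℝ)
          ≤ (i : ℝ) * ((Φ.image (g * ·) \ Φ).card : ℝ) := by exact_mod_cast h1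
      have hΨge : (Φ.card : ℝ) ≤ (Ψ i).card := by exact_mod_cast hΨcard_ge i hi1
      calc (((Ψ i).image (g * ·) \ Ψ i).card : ℝ)
          ≤ (i : ℝ) * ((Φ.image (g * ·) \ Φ).card : ℝ) := h1'
        _ ≤ (i : ℝ) * ((ε / N) * Φ.card) := by
            apply mul_le_mul_of_nonneg_left h2 (by positivity)
        _ ≤ (N : ℝ) * ((ε / N) * Φ.card) := by
            apply mul_le_mul_of_nonneg_right hiR (by positivity)
        _ = ε * Φ.card := by field_simp
        _ ≤ ε * (Ψ i).card := by nlinarith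

open Classical Filter Topology in
theorem amenableGroup_of_comm {H : Type*} [Group H] (hc : ∀ a b : H, a * b = b * a) :
    AmenableGroup H := by
  set S : H → ℝ → Set (Finset H) := fun g ε =>
    {Φ | Φ.Nonempty ∧ (((Φ.image (g * ·)) \ Φ).card : ℝ) ≤ ε * Φ.card} with hS
  set C : Set (Set (Finset H)) := {T | ∃ g ε, 0 < ε ∧ T = S g ε} with hC
  have hgen : Filter.NeBot (Filter.generate C) := by
    rw [Filter.generate_neBot_iff]
    intro t hsub hfin
    haveI := hfin.fintype
    by_cases hne : t.Nonempty
    · have hdata : ∀ T ∈ t, ∃ g ε, 0 < ε ∧ T = S g ε := fun T hT => hsub hT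
      choose gf εf hεf hTf using hdata
      have hattne : (hfin.toFinset.attach).Nonempty := by
        obtain ⟨T0, hT0⟩ := hne
        exact ⟨⟨T0, hfin.mem_toFinset.2 hT0⟩, Finset.mem_attach _ _⟩
      set F : Finset H := hfin.toFinset.attach.image
        (fun T => gf T.1 (hfin.mem_toFinset.1 T.2)) with hF
      set Es : Finset ℝ := hfin.toFinset.attach.image
        (fun T => εf T.1 (hfin.mem_toFinset.1 T.2)) with hEs
      have hEsne : Es.Nonempty := hattne.image _
      set ε0 : ℝ := Es.min' hEsne with hε0
      have hε0pos : 0 < ε0 := by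
        obtain ⟨T, -, hTeq⟩ := Finset.mem_image.1 (Es.min'_mem hEsne)
        have hpos := hεf T.1 (hfin.mem_toFinset.1 T.2)
        rw [hTeq] at hpos
        exact hpos
      obtain ⟨Φ, hΦne, hΦ⟩ := folner hc F ε0 hε0pos
      refine ⟨Φ, ?_⟩
      rw [Set.mem_sInter]
      intro T hT
      rw [hTf T hT]
      refine ⟨hΦne, ?_⟩
      have hgmem : gf T hT ∈ F := by
        rw [hF]
        apply Finset.mem_image.2
        exact ⟨⟨T, hfin.mem_toFinset.2 hT⟩, Finset.mem_attach _ _, rfl⟩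
      have hεle : ε0 ≤ εf T hT := by
        apply Finset.min'_le
        rw [hEs]
        apply Finset.mem_image.2
        exact ⟨⟨T, hfin.mem_toFinset.2 hT⟩, Finset.mem_attach _ _, rfl⟩
      calc (((Φ.image ((gf T hT) * ·)) \ Φ).card : ℝ) ≤ ε0 * Φ.card := hΦ _ hgmem
        _ ≤ εf T hT * Φ.card := by
            apply mul_le_mul_of_nonneg_right hεle (Nat.cast_nonneg _)
    · rw [Set.not_nonempty_iff_eq_empty] at hne
      subst hne
      rw [Set.sInter_empty]
      exact ⟨∅, Set.mem_univ _⟩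
  obtain ⟨U, hU⟩ := @Ultrafilter.exists_le (Finset H) (Filter.generate C) hgen
  have hUS : ∀ (g : H) (ε : ℝ), 0 < ε → S g ε ∈ U := by
    intro g ε hε
    exact hU (Filter.mem_generate_of_mem ⟨g, ε, hε, rfl⟩)
  set r : Set H → Finset H → ℝ :=
    fun A Φ => ((((Φ : Set H) ∩ A).ncard : ℝ)) / Φ.card with hr
  have hr01 : ∀ A Φ, r A Φ ∈ Set.Icc (0:ℝ) 1 := by
    intro A Φ
    constructor
    · apply div_nonneg (Nat.cast_nonneg _) (Nat.cast_nonneg _)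
    · rcases Nat.eq_zero_or_pos Φ.card with h0 | hpos
      · rw [hr]; simp [h0]
      · rw [hr, div_le_one (by exact_mod_cast hpos)]
        have : ((Φ : Set H) ∩ A).ncard ≤ ((Φ : Set H)).ncard :=
          Set.ncard_le_ncard Set.inter_subset_left (Φ.finite_toSet)
        rw [Set.ncard_coe_finset] at this
        exact_mod_cast this
  have hlim : ∀ A : Set H, ∃ x ∈ Set.Icc (0:ℝ) 1, Filter.Tendsto (r A) U (𝓝 x) := by
    intro A
    have hle : ↑(U.map (r A)) ≤ Filter.principal (Set.Icc (0:ℝ) 1) := by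
      rw [Filter.le_principal_iff]
      have : (r A) ⁻¹' (Set.Icc (0:ℝ) 1) = Set.univ := by
        ext Φ; simpa using hr01 A Φ
      exact Filter.mem_map.2 (by rw [this]; exact Filter.univ_mem)
    obtain ⟨x, hx, hxle⟩ := isCompact_Icc.ultrafilter_le_nhds (U.map (r A)) hle
    exact ⟨x, hx, hxle⟩
  choose ν hν hTend using hlim
  refine ⟨ν, ⟨?_, fun A => (hν A).1, ?_⟩, ?_⟩
  · -- total mass one
    have heq : ∀ᶠ Φ in (U : Filter (Finset H)), r Set.univ Φ = 1 := by
      apply Filter.eventually_of_mem (hUS 1 1 one_pos)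
      rintro Φ ⟨hΦne, -⟩
      have hcard : (0:ℝ) < Φ.card := by exact_mod_cast Finset.card_pos.2 hΦne
      rw [hr]
      simp only [Set.inter_univ, Set.ncard_coe_finset]
      field_simp
    exact tendsto_nhds_unique ((hTend Set.univ).congr' heq) tendsto_const_nhds
  · -- additivity
    intro A B hAB
    have hpt : ∀ Φ, r (A ∪ B) Φ = r A Φ + r B Φ := by
      intro Φ
      have hfil : (Φ : Set H) ∩ (A ∪ B) = ((Φ : Set H) ∩ A) ∪ ((Φ : Set H) ∩ B) :=
        Set.inter_union_distrib_left _ _ _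
      have hdis : Disjoint ((Φ : Set H) ∩ A) ((Φ : Set H) ∩ B) :=
        hAB.mono Set.inter_subset_right Set.inter_subset_right
      have hcard : ((Φ : Set H) ∩ (A ∪ B)).ncard
          = ((Φ : Set H) ∩ A).ncard + ((Φ : Set H) ∩ B).ncard := by
        rw [hfil]
        exact Set.ncard_union_eq hdis (Φ.finite_toSet.inter_of_left _)
          (Φ.finite_toSet.inter_of_left _)
      rw [hr]
      simp only
      rw [hcard]
      push_cast
      rw [add_div]
    have h1 : Filter.Tendsto (r (A ∪ B)) U (𝓝 (ν A + ν B)) := by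
      have := (hTend A).add (hTend B)
      apply this.congr
      intro Φ
      rw [hpt Φ]
    exact tendsto_nhds_unique (hTend (A ∪ B)) h1
  · -- invariance
    intro g A
    have hev : ∀ ε : ℝ, 0 < ε → ∀ᶠ Φ in (U : Filter (Finset H)),
        |r ((g * ·) '' A) Φ - r A Φ| ≤ ε := by
      intro ε hε
      apply Filter.eventually_of_mem (hUS g⁻¹ ε hε)
      rintro Φ ⟨hΦne, hbound⟩
      have hcard : (0:ℝ) < Φ.card := by exact_mod_cast Finset.card_pos.2 hΦne
      set Ψ : Finset H := Φ.image (g⁻¹ * ·) with hΨdef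
      have hcardΨ : Ψ.card = Φ.card :=
        Finset.card_image_of_injective _ (mul_right_injective g⁻¹)
      have hΨcoe : (Ψ : Set H) = (g⁻¹ * ·) '' (Φ : Set H) := Finset.coe_image
      have hinj : Function.Injective (g⁻¹ * ·) := mul_right_injective g⁻¹
      -- numerator of r (gA) Φ
      have hnum : ((Φ : Set H) ∩ ((g * ·) '' A)).ncard = ((Ψ : Set H) ∩ A).ncard := by
        have himg : (g⁻¹ * ·) '' ((Φ : Set H) ∩ ((g * ·) '' A))
            = (Ψ : Set H) ∩ A := by
          rw [Set.image_inter hinj, hΨcoe]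
          congr 1
          ext x
          simp only [Set.mem_image]
          constructor
          · rintro ⟨y, ⟨z, hz, rfl⟩, rfl⟩
            simpa [← mul_assoc] using hz
          · intro hx
            exact ⟨g * x, ⟨x, hx, rfl⟩, by rw [← mul_assoc]; simp⟩
        rw [← himg, Set.ncard_image_of_injective _ hinj]
      -- comparison
      have hfin1 : ((Φ : Set H) ∩ A).Finite := Φ.finite_toSet.inter_of_left _
      have hfin2 : ((Ψ : Set H) ∩ A).Finite := Ψ.finite_toSet.inter_of_left _
      have hsub1 : (Ψ : Set H) ∩ A ⊆ ((Φ : Set H) ∩ A) ∪ ((Ψ \ Φ : Finset H) : Set H) := by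
        intro x hx
        by_cases hxΦ : x ∈ (Φ : Set H)
        · exact Or.inl ⟨hxΦ, hx.2⟩
        · refine Or.inr ?_
          rw [Finset.coe_sdiff]
          exact ⟨hx.1, hxΦ⟩
      have hsub2 : (Φ : Set H) ∩ A ⊆ ((Ψ : Set H) ∩ A) ∪ ((Φ \ Ψ : Finset H) : Set H) := by
        intro x hx
        by_cases hxΨ : x ∈ (Ψ : Set H)
        · exact Or.inl ⟨hxΨ, hx.2⟩
        · refine Or.inr ?_
          rw [Finset.coe_sdiff]
          exact ⟨hx.1, hxΨ⟩
      have hsd : (Φ \ Ψ).card = (Ψ \ Φ).card := by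
        have h1 := Finset.card_sdiff_add_card_inter Φ Ψ
        have h2 := Finset.card_sdiff_add_card_inter Ψ Φ
        rw [Finset.inter_comm] at h2
        omega
      have hc1 : (((Ψ : Set H) ∩ A).ncard : ℝ)
          ≤ ((Φ : Set H) ∩ A).ncard + (Ψ \ Φ).card := by
        have := Set.ncard_le_ncard hsub1 (hfin1.union (Ψ \ Φ).finite_toSet)
        have h2 := Set.ncard_union_le ((Φ : Set H) ∩ A) ((Ψ \ Φ : Finset H) : Set H)
        rw [Set.ncard_coe_finset] at h2
        exact_mod_cast le_trans this h2
      have hc2 : (((Φ : Set H) ∩ A).ncard : ℝ)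
          ≤ ((Ψ : Set H) ∩ A).ncard + (Ψ \ Φ).card := by
        have := Set.ncard_le_ncard hsub2 (hfin2.union (Φ \ Ψ).finite_toSet)
        have h2 := Set.ncard_union_le ((Ψ : Set H) ∩ A) ((Φ \ Ψ : Finset H) : Set H)
        rw [Set.ncard_coe_finset, hsd] at h2
        exact_mod_cast le_trans this h2
      have hd : ((Ψ \ Φ).card : ℝ) ≤ ε * Φ.card := hbound
      have habs : |(((Φ : Set H) ∩ ((g * ·) '' A)).ncard : ℝ)
          - (((Φ : Set H) ∩ A).ncard : ℝ)| ≤ ε * Φ.card := by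
        rw [hnum, abs_sub_le_iff]
        constructor <;> linarith
      rw [hr]
      simp only
      rw [div_sub_div_same, abs_div, abs_of_pos hcard, div_le_iff₀ hcard]
      exact habs
    have hdiff : Filter.Tendsto (fun Φ => r ((g * ·) '' A) Φ - r A Φ) U
        (𝓝 (ν ((g * ·) '' A) - ν A)) := (hTend _).sub (hTend A)
    have habs2 : ∀ ε : ℝ, 0 < ε → |ν ((g * ·) '' A) - ν A| ≤ ε := by
      intro ε hε
      exact le_of_tendsto hdiff.abs (hev ε hε)
    have h0 : |ν ((g * ·) '' A) - ν A| ≤ 0 := by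
      apply le_of_forall_pos_le_add
      intro ε hε
      simpa using habs2 ε hε
    have h1 : ν ((g * ·) '' A) - ν A = 0 := by
      have h2 := abs_nonneg (ν ((g * ·) '' A) - ν A)
      exact abs_eq_zero.1 (le_antisymm h0 h2)
    linarith

-- conjugation basics
theorem conjNonId_comp {G : Type*} [Group G] (a b : G) (x : {h : G // h ≠ 1}) :
    conjNonId a (conjNonId b x) = conjNonId (a * b) x := by
  apply Subtype.ext
  show a * (b * x.1 * b⁻¹) * a⁻¹ = (a * b) * x.1 * (a * b)⁻¹
  group

theorem conjNonId_one {G : Type*} [Group G] (x : {h : G // h ≠ 1}) :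
    conjNonId 1 x = x := by
  apply Subtype.ext
  show 1 * x.1 * 1⁻¹ = x.1
  group

/-- the orbit equivalence relation of the conjugation action on nontrivial elements -/
def conjSetoid (G : Type*) [Group G] : Setoid {h : G // h ≠ 1} where
  r x y := ∃ g, conjNonId g x = y
  iseqv := by
    refine ⟨fun x => ⟨1, conjNonId_one x⟩, ?_, ?_⟩
    · rintro x y ⟨g, rfl⟩
      exact ⟨g⁻¹, by rw [conjNonId_comp, inv_mul_cancel, conjNonId_one]⟩
    · rintro x y z ⟨g, rfl⟩ ⟨g', rfl⟩
      exact ⟨g' * g, by rw [conjNonId_comp]⟩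

/-- Every inner amenable commutative transitive group is amenable. -/
theorem amenable_of_innerAmenable_of_CT
    (G : Type*) [Group G] (hIA : InnerAmenable G)
    (hCT : ∀ g : G, g ≠ 1 → ∀ a ∈ Subgroup.centralizer {g}, ∀ b ∈ Subgroup.centralizer {g},
      a * b = b * a) :
    AmenableGroup G := by

  classical
  obtain ⟨m, hm, hminv⟩ := hIA
  letI : Setoid {h : G // h ≠ 1} := conjSetoid G
  -- orbit representatives and transporters
  have hrel : ∀ x : {h : G // h ≠ 1},
      ∃ g : G, conjNonId g (⟦x⟧ : Quotient (conjSetoid G)).out = x :=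
    fun x => Quotient.exact (Quotient.out_eq ⟦x⟧)
  choose t ht using hrel
  -- stabilizers lie in centralizers
  have hstab : ∀ (o : {h : G // h ≠ 1}) (w : G), conjNonId w o = o →
      w ∈ Subgroup.centralizer {o.1} := by
    intro o w hw
    rw [Subgroup.mem_centralizer_iff]
    intro h hh
    rw [Set.mem_singleton_iff] at hh
    subst hh
    have hw' : w * o.1 * w⁻¹ = o.1 := congrArg Subtype.val hw
    have : w * o.1 = o.1 * w := mul_inv_eq_iff_eq_mul.1 hw'
    exact this.symm
  -- for every orbit, an invariant mean on the (abelian) stabilizer of its representative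
  have hmeans : ∀ q : Quotient (conjSetoid G),
      ∃ μ : Set ↥(Subgroup.centralizer {(q.out).1}) → ℝ,
      IsFAPMeasure μ ∧ ∀ (c : ↥(Subgroup.centralizer {(q.out).1}))
        (A : Set ↥(Subgroup.centralizer {(q.out).1})), μ ((c * ·) '' A) = μ A := by
    intro q
    have hcomm : ∀ a b : ↥(Subgroup.centralizer {(q.out).1}), a * b = b * a := by
      intro a b
      exact Subtype.ext (hCT q.out.1 q.out.2 a.1 a.2 b.1 b.2)
    exact amenableGroup_of_comm hcomm
  choose μc hμc hμinv using hmeans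
  -- the induced function on X
  set F : Set G → {h : G // h ≠ 1} → ℝ := fun B x =>
    μc ⟦x⟧ {h : ↥(Subgroup.centralizer {((⟦x⟧ : Quotient (conjSetoid G)).out).1}) |
      t x * (h : G) ∈ B} with hF
  have hF0 : ∀ B x, 0 ≤ F B x := fun B x => (hμc ⟦x⟧).2.1 _
  have hF1 : ∀ B x, F B x ≤ 1 := fun B x => FAP.le_one (hμc ⟦x⟧) _
  -- equivariance
  have hequi : ∀ (g : G) (B : Set G) (x : {h : G // h ≠ 1}),
      F ((g * ·) '' B) (conjNonId g x) = F B x := by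
    intro g B x
    have hq : (⟦conjNonId g x⟧ : Quotient (conjSetoid G)) = ⟦x⟧ := by
      apply Quotient.sound
      exact ⟨g⁻¹, by rw [conjNonId_comp, inv_mul_cancel, conjNonId_one]⟩
    rw [hF]
    simp only
    rw [hq]
    set o : {h : G // h ≠ 1} := (⟦x⟧ : Quotient (conjSetoid G)).out with ho
    have htz : conjNonId (t (conjNonId g x)) o = conjNonId g x := by
      have h1 := ht (conjNonId g x)
      rw [hq] at h1
      exact h1
    have htx : conjNonId (t x) o = x := ht x
    have hcomb : conjNonId ((g * t x)⁻¹ * t (conjNonId g x)) o = o := by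
      rw [← conjNonId_comp, htz]
      have h2 : conjNonId (g * t x) o = conjNonId g x := by
        rw [← conjNonId_comp, htx]
      rw [← h2, conjNonId_comp, inv_mul_cancel, conjNonId_one]
    set h0 : G := (g * t x)⁻¹ * t (conjNonId g x) with hh0
    have hh0mem : h0 ∈ Subgroup.centralizer {o.1} := hstab o h0 hcomb
    set h0' : ↥(Subgroup.centralizer {o.1}) := ⟨h0, hh0mem⟩ with hh0'
    have htzeq : t (conjNonId g x) = g * (t x * h0) := by
      rw [hh0]
      group
    have himg : ∀ y : G, (y ∈ (g * ·) '' B) ↔ g⁻¹ * y ∈ B := by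
      intro y
      constructor
      · rintro ⟨b, hb, rfl⟩; simpa [← mul_assoc] using hb
      · intro hy; exact ⟨g⁻¹ * y, hy, by simp [← mul_assoc]⟩
    have hset : {h : ↥(Subgroup.centralizer {o.1}) | t (conjNonId g x) * (h : G) ∈ (g * ·) '' B}
        = (fun h => h0'⁻¹ * h) '' {h : ↥(Subgroup.centralizer {o.1}) | t x * (h : G) ∈ B} := by
      ext h
      simp only [Set.mem_setOf_eq, Set.mem_image]
      constructor
      · intro hmem
        refine ⟨h0' * h, ?_, by group⟩
        replace hmem := (himg _).1 hmem
        have : g⁻¹ * (t (conjNonId g x) * (h : G)) = t x * ((h0' * h : ↥(Subgroup.centralizer {o.1})) : G) := by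
          rw [htzeq]
          push_cast
          group
          rfl
        rwa [this] at hmem
      · rintro ⟨h', hh', rfl⟩
        apply (himg _).2
        have : g⁻¹ * (t (conjNonId g x) * ((h0'⁻¹ * h' : ↥(Subgroup.centralizer {o.1})) : G))
            = t x * (h' : G) := by
          rw [htzeq]
          push_cast [hh0']
          group
        rwa [this]
    rw [hset]
    exact hμinv ⟦x⟧ h0'⁻¹ _
  -- the invariant mean on G
  refine ⟨fun B => FAP.I m (F B), ⟨?_, ?_, ?_⟩, ?_⟩
  · apply FAP.I_one hm
    intro x
    have : {h : ↥(Subgroup.centralizer {((⟦x⟧ : Quotient (conjSetoid G)).out).1}) |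
        t x * (h : G) ∈ (Set.univ : Set G)} = Set.univ := by
      ext h; simp
    rw [hF]
    simp only
    rw [this]
    exact (hμc ⟦x⟧).1
  · intro A
    exact FAP.I_nonneg hm _ (hF0 A) (hF1 A)
  · intro A B hAB
    apply FAP.I_add hm (F A) (F B) (F (A ∪ B)) _ (hF0 A) (hF0 B) (hF1 (A ∪ B))
    intro x
    rw [hF]
    simp only
    have hsplit : {h : ↥(Subgroup.centralizer {((⟦x⟧ : Quotient (conjSetoid G)).out).1}) |
        t x * (h : G) ∈ A ∪ B}
        = {h : ↥(Subgroup.centralizer {((⟦x⟧ : Quotient (conjSetoid G)).out).1}) |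
            t x * (h : G) ∈ A}
          ∪ {h : ↥(Subgroup.centralizer {((⟦x⟧ : Quotient (conjSetoid G)).out).1}) |
            t x * (h : G) ∈ B} := by
      ext h
      simp only [Set.mem_setOf_eq, Set.mem_union]
    have hdis : Disjoint
        {h : ↥(Subgroup.centralizer {((⟦x⟧ : Quotient (conjSetoid G)).out).1}) |
          t x * (h : G) ∈ A}
        {h : ↥(Subgroup.centralizer {((⟦x⟧ : Quotient (conjSetoid G)).out).1}) |
          t x * (h : G) ∈ B} := by
      rw [Set.disjoint_left]
      intro h h1 h2
      exact Set.disjoint_left.1 hAB h1 h2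
    rw [hsplit]
    exact (hμc ⟦x⟧).2.2 _ _ hdis
  · intro g B
    apply FAP.I_congr
    intro c
    have hlev : {x | c ≤ F ((g * ·) '' B) x} = conjNonId g '' {x | c ≤ F B x} := by
      ext y
      simp only [Set.mem_setOf_eq, Set.mem_image]
      constructor
      · intro hy
        refine ⟨conjNonId g⁻¹ y, ?_, by rw [conjNonId_comp, mul_inv_cancel, conjNonId_one]⟩
        have h1 : conjNonId g (conjNonId g⁻¹ y) = y := by
          rw [conjNonId_comp, mul_inv_cancel, conjNonId_one]
        rw [← hequi g B (conjNonId g⁻¹ y), h1]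
        exact hy
      · rintro ⟨x, hx, rfl⟩
        rw [hequi g B x]
        exact hx
    rw [hlev]
    exact hminv g _
end

section
/- If G is an inner amenable group and H is a subgroup of G that is existentially closed in G, then H is inner amenable. -/
open FirstOrder

/-- The first-order language of groups: one constant (identity), one unary
function (inverse), one binary function (multiplication), no relations. -/
def grpLang : FirstOrder.Language :=
  ⟨fun n => match n with
    | 0 => Unit
    | 1 => Unit
    | 2 => Unit
    | _ => Empty,
   fun _ => Empty⟩

/-- Every group is a structure for the language of groups in the natural way. -/
instance grpStructure (G : Type*) [Group G] : grpLang.Structure G where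
  funMap {n} f v :=
    match n, f with
    | 0, _ => 1
    | 1, _ => (v 0)⁻¹
    | 2, _ => v 0 * v 1
  RelMap {n} r := Empty.elim r

/-- `T` is an `(S, ε)`-conjugation-Følner set: `|gTg⁻¹ △ T| < ε|T|` for all `g ∈ S`. -/
def IsCFolner {G : Type*} [Group G] (S : Finset G) (ε : ℝ) (T : Finset G) : Prop :=
  letI := Classical.decEq G
  ∀ g ∈ S, (((symmDiff (T.image fun x => g * x * g⁻¹) T).card : ℝ)) < ε * T.card

/-- `G` is inner amenable (Følner formulation): for every finite `S ⊆ G`, every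
`ε > 0` and every `n`, there is a nonempty finite `(S, ε)`-conjugation-Følner
set of cardinality at least `n`. -/
def FolnerInnerAmenable (G : Type*) [Group G] : Prop :=
  ∀ (S : Finset G) (ε : ℝ), 0 < ε → ∀ n : ℕ,
    ∃ T : Finset G, T.Nonempty ∧ n ≤ T.card ∧ IsCFolner S ε T

/-- A subgroup `H ≤ G` is existentially closed in `G` if every existential
first-order statement in the language of groups with parameters from `H`
(i.e. `∃ x̄ φ(x̄, h̄)` with `φ` quantifier-free) that holds in `G` also holds
in `H`. -/
def ExistentiallyClosedIn {G : Type*} [Group G] (H : Subgroup G) : Prop :=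
  ∀ (m n : ℕ) (φ : grpLang.BoundedFormula (Fin m) n), φ.IsQF →
    ∀ v : Fin m → H,
      (∃ x : Fin n → G, φ.Realize (fun i => (v i : G)) x) →
      ∃ x : Fin n → H, φ.Realize v x

open FirstOrder.Language

/-! ### Term helpers -/

def tmul {α : Type*} (t₁ t₂ : grpLang.Term α) : grpLang.Term α :=
  Term.func (l := 2) Unit.unit ![t₁, t₂]

def tinv {α : Type*} (t : grpLang.Term α) : grpLang.Term α :=
  Term.func (l := 1) Unit.unit ![t]

@[simp] lemma realize_tmul {G : Type*} [Group G] {α : Type*} (env : α → G)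
    (t₁ t₂ : grpLang.Term α) :
    (tmul t₁ t₂).realize env = t₁.realize env * t₂.realize env := rfl

@[simp] lemma realize_tinv {G : Type*} [Group G] {α : Type*} (env : α → G)
    (t : grpLang.Term α) :
    (tinv t).realize env = (t.realize env)⁻¹ := rfl

/-! ### Conjunctions and disjunctions of lists of formulas -/

def conjList {α : Type*} {n : ℕ} : List (grpLang.BoundedFormula α n) → grpLang.BoundedFormula α n
  | [] => ⊤
  | φ :: l => φ ⊓ conjList l

def disjList {α : Type*} {n : ℕ} : List (grpLang.BoundedFormula α n) → grpLang.BoundedFormula α n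
  | [] => ⊥
  | φ :: l => φ ⊔ disjList l

lemma conjList_isQF {α : Type*} {n : ℕ} {l : List (grpLang.BoundedFormula α n)}
    (h : ∀ φ ∈ l, φ.IsQF) : (conjList l).IsQF := by
  induction l with
  | nil => exact BoundedFormula.IsQF.top
  | cons φ l ih =>
    exact (h φ (by simp)).inf (ih fun ψ hψ => h ψ (by simp [hψ]))

lemma disjList_isQF {α : Type*} {n : ℕ} {l : List (grpLang.BoundedFormula α n)}
    (h : ∀ φ ∈ l, φ.IsQF) : (disjList l).IsQF := by
  induction l with
  | nil => exact BoundedFormula.isQF_bot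
  | cons φ l ih =>
    exact (h φ (by simp)).sup (ih fun ψ hψ => h ψ (by simp [hψ]))

lemma realize_conjList {G : Type*} [Group G] {α : Type*} {n : ℕ}
    {l : List (grpLang.BoundedFormula α n)} {v : α → G} {xs : Fin n → G} :
    (conjList l).Realize v xs ↔ ∀ φ ∈ l, φ.Realize v xs := by
  induction l with
  | nil => simp [conjList]
  | cons φ l ih => simp [conjList, BoundedFormula.realize_inf, ih]

lemma realize_disjList {G : Type*} [Group G] {α : Type*} {n : ℕ}
    {l : List (grpLang.BoundedFormula α n)} {v : α → G} {xs : Fin n → G} :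
    (disjList l).Realize v xs ↔ ∃ φ ∈ l, φ.Realize v xs := by
  induction l with
  | nil => simp [disjList]
  | cons φ l ih => simp [disjList, BoundedFormula.realize_sup, ih]

/-! ### Counting lemmas -/

lemma symmDiff_card_eq {α : Type*} [Group α] [DecidableEq α] {k : ℕ} (t : Fin k → α)
    (ht : Function.Injective t) (T : Finset α) (hT : ∀ y, y ∈ T ↔ ∃ i, t i = y)
    (g : α) (Bad : Finset (Fin k)) (hBad : ∀ i, i ∈ Bad ↔ g * t i * g⁻¹ ∉ T) :
    (symmDiff (T.image fun y => g * y * g⁻¹) T).card = 2 * Bad.card := by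
  have hconj : Function.Injective (fun y : α => g * y * g⁻¹) := fun a b hab => by
    simpa using mul_left_cancel (mul_right_cancel hab)
  have hTeq : T = Finset.univ.image t := by
    ext y; simp [hT, eq_comm]
  have hcard : (T.image fun y => g * y * g⁻¹).card = T.card :=
    Finset.card_image_of_injective _ hconj
  have himg : (T.image fun y => g * y * g⁻¹) \ T = Bad.image fun i => g * t i * g⁻¹ := by
    ext y
    simp only [Finset.mem_sdiff, Finset.mem_image, hTeq, Finset.mem_univ, true_and]
    constructor
    · rintro ⟨⟨z, ⟨i, rfl⟩, rfl⟩, hy⟩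
      exact ⟨i, (hBad i).2 (by rw [hTeq]; simpa using hy), rfl⟩
    · rintro ⟨i, hi, rfl⟩
      refine ⟨⟨t i, ⟨i, rfl⟩, rfl⟩, ?_⟩
      have := (hBad i).1 hi
      rw [hTeq] at this
      simpa using this
  have hbadcard : ((T.image fun y => g * y * g⁻¹) \ T).card = Bad.card := by
    rw [himg]
    exact Finset.card_image_of_injective _ fun a b hab => ht (hconj hab)
  have hbadcard' : (T \ (T.image fun y => g * y * g⁻¹)).card = Bad.card := by
    rw [← Finset.card_sdiff_comm hcard, hbadcard]
  rw [symmDiff_def]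
  rw [show ((T.image fun y => g * y * g⁻¹) \ T ⊔ T \ (T.image fun y => g * y * g⁻¹) : Finset α)
      = ((T.image fun y => g * y * g⁻¹) \ T) ∪ (T \ (T.image fun y => g * y * g⁻¹)) from rfl]
  rw [Finset.card_union_of_disjoint disjoint_sdiff_sdiff, hbadcard, hbadcard']
  ring

lemma symmDiff_card_le {α : Type*} [Group α] [DecidableEq α] {k : ℕ} (x : Fin k → α)
    (hx : Function.Injective x) (TH : Finset α) (hTH : ∀ y, y ∈ TH ↔ ∃ i, x i = y)
    (g : α) (Bad : Finset (Fin k)) (h : ∀ i, i ∉ Bad → ∃ j, g * x i * g⁻¹ = x j) :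
    (symmDiff (TH.image fun y => g * y * g⁻¹) TH).card ≤ 2 * Bad.card := by
  have hconj : Function.Injective (fun y : α => g * y * g⁻¹) := fun a b hab => by
    simpa using mul_left_cancel (mul_right_cancel hab)
  have hcard : (TH.image fun y => g * y * g⁻¹).card = TH.card :=
    Finset.card_image_of_injective _ hconj
  have hsub : (TH.image fun y => g * y * g⁻¹) \ TH ⊆ Bad.image fun i => g * x i * g⁻¹ := by
    intro y hy
    rw [Finset.mem_sdiff] at hy
    obtain ⟨hy1, hy2⟩ := hy
    rw [Finset.mem_image] at hy1
    obtain ⟨z, hz, rfl⟩ := hy1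
    obtain ⟨i, rfl⟩ := (hTH z).1 hz
    rw [Finset.mem_image]
    refine ⟨i, ?_, rfl⟩
    by_contra hi
    obtain ⟨j, hj⟩ := h i hi
    exact hy2 ((hTH _).2 ⟨j, hj.symm⟩)
  have h1 : ((TH.image fun y => g * y * g⁻¹) \ TH).card ≤ Bad.card :=
    le_trans (Finset.card_le_card hsub) Finset.card_image_le
  have h2 : (TH \ (TH.image fun y => g * y * g⁻¹)).card
      = ((TH.image fun y => g * y * g⁻¹) \ TH).card :=
    (Finset.card_sdiff_comm hcard).symm
  rw [symmDiff_def]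
  rw [show ((TH.image fun y => g * y * g⁻¹) \ TH ⊔ TH \ (TH.image fun y => g * y * g⁻¹) : Finset α)
      = ((TH.image fun y => g * y * g⁻¹) \ TH) ∪ (TH \ (TH.image fun y => g * y * g⁻¹)) from rfl]
  rw [Finset.card_union_of_disjoint disjoint_sdiff_sdiff, h2]
  omega

/-- If `G` is inner amenable and `H` is a subgroup of `G` that is existentially
closed in `G`, then `H` is inner amenable. -/
theorem innerAmenable_of_existentiallyClosed
    (G : Type*) [Group G] (H : Subgroup G)
    (hG : FolnerInnerAmenable G) (hec : ExistentiallyClosedIn H) :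
    FolnerInnerAmenable H := by
  classical
  letI : DecidableEq G := Classical.decEq G
  letI : DecidableEq ↥H := Classical.decEq ↥H
  intro S ε hε n
  set m := S.card with hm
  set v : Fin m → H := fun i => (S.equivFin.symm i : H) with hv
  obtain ⟨T, hTne, hTcard, hTF⟩ := hG (S.image fun h : H => (h : G)) ε hε (max n 1)
  set k := T.card with hk
  set t : Fin k → G := fun i => (T.equivFin.symm i : G) with htdef
  have ht_inj : Function.Injective t := fun i j hij =>
    T.equivFin.symm.injective (Subtype.ext hij)
  have ht_mem : ∀ i, t i ∈ T := fun i => (T.equivFin.symm i).2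
  have hT_iff : ∀ y, y ∈ T ↔ ∃ i, t i = y := by
    intro y
    constructor
    · intro hy; exact ⟨T.equivFin ⟨y, hy⟩, by simp [htdef]⟩
    · rintro ⟨i, rfl⟩; exact ht_mem i
  set Bad : Fin m → Finset (Fin k) :=
    fun a => Finset.univ.filter fun i => (v a : G) * t i * (v a : G)⁻¹ ∉ T with hBdef
  have hBad : ∀ a i, i ∈ Bad a ↔ (v a : G) * t i * (v a : G)⁻¹ ∉ T := by
    intro a i; simp [hBdef]
  -- the formula
  set xv : Fin k → grpLang.Term (Fin m ⊕ Fin k) := fun i => Term.var (Sum.inr i) with hxv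
  set ct : Fin m → Fin k → grpLang.Term (Fin m ⊕ Fin k) :=
    fun a i => tmul (tmul (Term.var (Sum.inl a)) (xv i)) (tinv (Term.var (Sum.inl a))) with hct
  set distφ : Fin k → Fin k → grpLang.BoundedFormula (Fin m) k :=
    fun i j => if i = j then ⊤ else BoundedFormula.not ((xv i).bdEqual (xv j)) with hdist
  set clause : Fin m → Fin k → grpLang.BoundedFormula (Fin m) k :=
    fun a i => if i ∈ Bad a then ⊤
      else disjList ((List.finRange k).map fun j => (ct a i).bdEqual (xv j)) with hclause
  set φ : grpLang.BoundedFormula (Fin m) k :=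
    conjList (((List.finRange k).flatMap fun i => (List.finRange k).map fun j => distφ i j)
      ++ ((List.finRange m).flatMap fun a => (List.finRange k).map fun i => clause a i)) with hφ
  have hφQF : φ.IsQF := by
    apply conjList_isQF
    intro ψ hψ
    rw [List.mem_append] at hψ
    rcases hψ with hψ | hψ <;>
      simp only [List.mem_flatMap, List.mem_map, List.mem_finRange, true_and] at hψ
    · obtain ⟨i, j, rfl⟩ := hψ
      by_cases hij : i = j
      · simp only [hdist, if_pos hij]; exact BoundedFormula.IsQF.top
      · simp only [hdist, if_neg hij]
        exact (BoundedFormula.IsAtomic.equal _ _).isQF.not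
    · obtain ⟨a, i, rfl⟩ := hψ
      by_cases hi : i ∈ Bad a
      · simp only [hclause, if_pos hi]; exact BoundedFormula.IsQF.top
      · simp only [hclause, if_neg hi]
        apply disjList_isQF
        intro χ hχ
        simp only [List.mem_map, List.mem_finRange, true_and] at hχ
        obtain ⟨j, rfl⟩ := hχ
        exact (BoundedFormula.IsAtomic.equal _ _).isQF
  have hφG : ∃ x : Fin k → G, φ.Realize (fun i => (v i : G)) x := by
    refine ⟨t, ?_⟩
    rw [hφ, realize_conjList]
    intro ψ hψ
    rw [List.mem_append] at hψ
    rcases hψ with hψ | hψ <;>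
      simp only [List.mem_flatMap, List.mem_map, List.mem_finRange, true_and] at hψ
    · obtain ⟨i, j, rfl⟩ := hψ
      by_cases hij : i = j
      · simp [hdist, if_pos hij]
      · simp only [hdist, if_neg hij, BoundedFormula.realize_not,
          BoundedFormula.realize_bdEqual, hxv, Term.realize_var, Sum.elim_inr]
        exact fun h => hij (ht_inj h)
    · obtain ⟨a, i, rfl⟩ := hψ
      by_cases hi : i ∈ Bad a
      · simp [hclause, if_pos hi]
      · simp only [hclause, if_neg hi]
        rw [realize_disjList]
        have hmem : (v a : G) * t i * (v a : G)⁻¹ ∈ T := by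
          by_contra hc
          exact hi ((hBad a i).2 hc)
        obtain ⟨j, hj⟩ := (hT_iff _).1 hmem
        refine ⟨_, List.mem_map.2 ⟨j, List.mem_finRange j, rfl⟩, ?_⟩
        simp only [BoundedFormula.realize_bdEqual, hct, hxv, realize_tmul, realize_tinv,
          Term.realize_var, Sum.elim_inr, Sum.elim_inl]
        exact hj.symm
  obtain ⟨x, hx⟩ := hec m k φ hφQF v hφG
  rw [hφ, realize_conjList] at hx
  have hx_inj : Function.Injective x := by
    intro i j hij
    by_contra hne
    have hmem : distφ i j ∈ (((List.finRange k).flatMap fun i =>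
        (List.finRange k).map fun j => distφ i j)
        ++ ((List.finRange m).flatMap fun a => (List.finRange k).map fun i => clause a i)) :=
      List.mem_append.2 (Or.inl (List.mem_flatMap.2 ⟨i, List.mem_finRange i,
        List.mem_map.2 ⟨j, List.mem_finRange j, rfl⟩⟩))
    have := hx _ hmem
    simp only [hdist, if_neg hne, BoundedFormula.realize_not,
      BoundedFormula.realize_bdEqual, hxv, Term.realize_var, Sum.elim_inr] at this
    exact this hij
  have hx_conj : ∀ a i, i ∉ Bad a → ∃ j, (v a) * x i * (v a)⁻¹ = x j := by
    intro a i hi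
    have hmem : clause a i ∈ (((List.finRange k).flatMap fun i =>
        (List.finRange k).map fun j => distφ i j)
        ++ ((List.finRange m).flatMap fun a => (List.finRange k).map fun i => clause a i)) :=
      List.mem_append.2 (Or.inr (List.mem_flatMap.2 ⟨a, List.mem_finRange a,
        List.mem_map.2 ⟨i, List.mem_finRange i, rfl⟩⟩))
    have h := hx _ hmem
    simp only [hclause, if_neg hi] at h
    rw [realize_disjList] at h
    obtain ⟨ψ, hψmem, hψ⟩ := h
    simp only [List.mem_map, List.mem_finRange, true_and] at hψmem
    obtain ⟨j, rfl⟩ := hψmem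
    refine ⟨j, ?_⟩
    simpa only [BoundedFormula.realize_bdEqual, hct, hxv, realize_tmul, realize_tinv,
      Term.realize_var, Sum.elim_inr, Sum.elim_inl] using hψ
  -- the witness Følner set in H
  refine ⟨Finset.image x Finset.univ, ?_, ?_, ?_⟩
  · have hk1 : 0 < k := lt_of_lt_of_le (by omega) hTcard
    exact ⟨x ⟨0, hk1⟩, Finset.mem_image.2 ⟨⟨0, hk1⟩, Finset.mem_univ _, rfl⟩⟩
  · rw [Finset.card_image_of_injective _ hx_inj, Finset.card_univ, Fintype.card_fin]
    omega
  · intro g hg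
    have hTH_iff : ∀ y, y ∈ Finset.image x Finset.univ ↔ ∃ i, x i = y := by
      intro y; simp
    set a : Fin m := S.equivFin ⟨g, hg⟩ with ha
    have hva : v a = g := by simp [hv, ha]
    have hgG : (g : G) ∈ S.image fun h : H => (h : G) :=
      Finset.mem_image.2 ⟨g, hg, rfl⟩
    have hle : (symmDiff ((Finset.image x Finset.univ).image fun y => g * y * g⁻¹)
        (Finset.image x Finset.univ)).card ≤ 2 * (Bad a).card := by
      apply symmDiff_card_le x hx_inj _ hTH_iff g (Bad a)
      intro i hi
      obtain ⟨j, hj⟩ := hx_conj a i hi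
      exact ⟨j, by rw [← hva]; exact hj⟩
    have heq : (symmDiff (T.image fun y => (g : G) * y * (g : G)⁻¹) T).card
        = 2 * (Bad a).card := by
      apply symmDiff_card_eq t ht_inj T hT_iff (g : G) (Bad a)
      intro i
      rw [hBad a i, hva]
    have hlt := hTF (g : G) hgG
    rw [heq] at hlt
    have hcardTH : ((Finset.image x Finset.univ).card : ℝ) = (T.card : ℝ) := by
      rw [Finset.card_image_of_injective _ hx_inj, Finset.card_univ, Fintype.card_fin]
    have final : ((symmDiff ((Finset.image x Finset.univ).image fun y => g * y * g⁻¹)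
          (Finset.image x Finset.univ)).card : ℝ)
        < ε * (Finset.image x Finset.univ).card := by
      calc ((symmDiff ((Finset.image x Finset.univ).image fun y => g * y * g⁻¹)
            (Finset.image x Finset.univ)).card : ℝ)
          ≤ ((2 * (Bad a).card : ℕ) : ℝ) := by exact_mod_cast hle
        _ < ε * T.card := hlt
        _ = ε * (Finset.image x Finset.univ).card := by rw [hcardTH]
    exact final
end
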